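/- arXiv:2305.18982 — 6 statements merged into one kernel-verified Lean document; each statement's English description precedes it below -/
import Mathlib

section
/- Let H be an infinite-dimensional complex Hilbert space, n ≥ 2 an integer, and φ : P_n(H) → P_n(H) a map such that for every pair U, V ∈ P_n(H): U ⊥ V if and only if φ(U) ⊥ φ(V), and U ∩ V = {0} if and only if φ(U) ∩ φ(V) = {0}. Then for every pair U, V ∈ P_n(H), U # V implies φ(U) # φ(V). -/
/-- Two subspaces are orthogonal if every vector of one is orthogonal to every vector
of the other. -/
def SubPerp {H : Type*} [NormedAddCommGroup H] [InnerProductSpace ℂ H]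
    (U V : Submodule ℂ H) : Prop :=
  ∀ x ∈ U, ∀ y ∈ V, (inner ℂ x y : ℂ) = 0

/-- `U # V` (`U` and `V` are 1-orthogonal): `dim (U ∩ V) = 1` and the orthogonal
complement of `U ∩ V` within `U` is orthogonal to the orthogonal complement of `U ∩ V`
within `V`. -/
def OneOrth {H : Type*} [NormedAddCommGroup H] [InnerProductSpace ℂ H]
    (U V : Submodule ℂ H) : Prop :=
  Module.finrank ℂ (U ⊓ V : Submodule ℂ H) = 1 ∧
  ∀ x ∈ U, ∀ y ∈ V,
    (∀ z ∈ U ⊓ V, (inner ℂ x z : ℂ) = 0) → (∀ z ∈ U ⊓ V, (inner ℂ y z : ℂ) = 0) →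
    (inner ℂ x y : ℂ) = 0

section Aux

open Module Submodule

variable {H : Type*} [NormedAddCommGroup H] [InnerProductSpace ℂ H]

lemma subPerp_symm {U V : Submodule ℂ H} (h : SubPerp U V) : SubPerp V U := by
  intro x hx y hy
  rw [inner_eq_zero_symm]
  exact h y hy x hx

lemma subPerp_of_le_orthogonal {U V : Submodule ℂ H} (h : V ≤ Uᗮ) : SubPerp U V :=
  fun x hx y hy => Submodule.inner_right_of_mem_orthogonal hx (h hy)

/-- An orthonormal family spanning a given finite-dimensional subspace of prescribed
dimension, viewed as vectors of the ambient space. -/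
lemma exists_orthonormal_fin (W : Submodule ℂ H) [FiniteDimensional ℂ W] {m : ℕ}
    (hW : finrank ℂ W = m) : ∃ f : Fin m → H, Orthonormal ℂ f ∧ ∀ i, f i ∈ W := by
  let b := stdOrthonormalBasis ℂ W
  refine ⟨fun i => (b (Fin.cast hW.symm i) : H), ?_, fun i => (b (Fin.cast hW.symm i)).2⟩
  have hb := b.orthonormal
  rw [orthonormal_iff_ite] at hb ⊢
  intro i j
  rw [← Submodule.coe_inner, hb]
  simp [Fin.ext_iff]

/-- An orthonormal family of any finite size inside an infinite-dimensional subspace. -/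
lemma exists_orthonormal_fin' (W : Submodule ℂ H) (hW : ¬ FiniteDimensional ℂ W) (m : ℕ) :
    ∃ f : Fin m → H, Orthonormal ℂ f ∧ ∀ i, f i ∈ W := by
  have hr : (m : Cardinal) ≤ Module.rank ℂ W := by
    refine le_trans (Cardinal.nat_lt_aleph0 m).le ?_
    rw [← not_lt, Module.rank_lt_aleph0_iff]
    exact hW
  obtain ⟨g, hg⟩ := exists_linearIndependent_of_le_rank hr
  have hg' : LinearIndependent ℂ (fun i => (g i : H)) := hg.map' W.subtype (ker_subtype W)
  set E := Submodule.span ℂ (Set.range fun i => (g i : H)) with hE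
  haveI : FiniteDimensional ℂ E := FiniteDimensional.span_of_finite ℂ (Set.finite_range _)
  have hEW : E ≤ W := span_le.mpr (by rintro _ ⟨i, rfl⟩; exact (g i).2)
  have hEm : finrank ℂ E = m := by
    rw [hE, finrank_span_eq_card hg', Fintype.card_fin]
  obtain ⟨f, hf, hfE⟩ := exists_orthonormal_fin E hEm
  exact ⟨f, hf, fun i => hEW (hfE i)⟩

/-- The key sufficiency lemma: if `U ⊓ V ≠ ⊥` and there are `n - 1` pairwise orthogonal
subspaces, each orthogonal to `U` and meeting `V` nontrivially, then `U # V`. -/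
lemma oneOrth_of_config {n : ℕ} (hn : 2 ≤ n) (U V : Submodule ℂ H)
    (hU : finrank ℂ U = n) (hV : finrank ℂ V = n) (hUV : U ⊓ V ≠ ⊥)
    (Z : Fin (n - 1) → Submodule ℂ H)
    (hZU : ∀ i, SubPerp (Z i) U)
    (hZV : ∀ i, Z i ⊓ V ≠ ⊥)
    (hZZ : ∀ i j, i ≠ j → SubPerp (Z i) (Z j)) : OneOrth U V := by
  haveI : FiniteDimensional ℂ V := FiniteDimensional.of_finrank_pos (by omega)
  haveI : FiniteDimensional ℂ U := FiniteDimensional.of_finrank_pos (by omega)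
  choose v hv0 hvne using fun i => (Submodule.ne_bot_iff _).1 (hZV i)
  have hvS : ∀ i, v i ∈ Uᗮ ⊓ V := by
    intro i
    refine Submodule.mem_inf.mpr ⟨?_, (Submodule.mem_inf.mp (hv0 i)).2⟩
    rw [Submodule.mem_orthogonal]
    intro u hu
    rw [inner_eq_zero_symm]
    exact hZU i (v i) (Submodule.mem_inf.mp (hv0 i)).1 u hu
  have hli : LinearIndependent ℂ v :=
    linearIndependent_of_ne_zero_of_inner_eq_zero hvne (fun i j hij =>
      hZZ i j hij (v i) (Submodule.mem_inf.mp (hv0 i)).1 (v j)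
        (Submodule.mem_inf.mp (hv0 j)).1)
  haveI : FiniteDimensional ℂ (Uᗮ ⊓ V : Submodule ℂ H) := Submodule.finiteDimensional_of_le inf_le_right
  have hSrank : n - 1 ≤ finrank ℂ (Uᗮ ⊓ V : Submodule ℂ H) := by
    have h1 : Submodule.span ℂ (Set.range v) ≤ Uᗮ ⊓ V :=
      span_le.mpr (by rintro _ ⟨i, rfl⟩; exact hvS i)
    have h2 : finrank ℂ (Submodule.span ℂ (Set.range v)) = n - 1 := by
      rw [finrank_span_eq_card hli, Fintype.card_fin]
    rw [← h2]
    exact Submodule.finrank_mono h1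
  haveI : FiniteDimensional ℂ (U ⊓ V : Submodule ℂ H) :=
    Submodule.finiteDimensional_of_le (inf_le_left : U ⊓ V ≤ U)
  have hDS : (U ⊓ V) ⊓ (Uᗮ ⊓ V) = (⊥ : Submodule ℂ H) := by
    rw [eq_bot_iff]
    rintro x hx
    have hxU : x ∈ U := (Submodule.mem_inf.mp (Submodule.mem_inf.mp hx).1).1
    have hxUo : x ∈ Uᗮ := (Submodule.mem_inf.mp (Submodule.mem_inf.mp hx).2).1
    have hxx : (inner ℂ x x : ℂ) = 0 := Submodule.inner_right_of_mem_orthogonal hxU hxUo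
    simpa [Submodule.mem_bot] using inner_self_eq_zero.mp hxx
  have hsum : finrank ℂ ((U ⊓ V) ⊔ (Uᗮ ⊓ V) : Submodule ℂ H)
        + finrank ℂ ((U ⊓ V) ⊓ (Uᗮ ⊓ V) : Submodule ℂ H)
      = finrank ℂ (U ⊓ V : Submodule ℂ H) + finrank ℂ (Uᗮ ⊓ V : Submodule ℂ H) :=
    Submodule.finrank_sup_add_finrank_inf_eq _ _
  rw [hDS, finrank_bot, add_zero] at hsum
  have hle : finrank ℂ ((U ⊓ V) ⊔ (Uᗮ ⊓ V) : Submodule ℂ H) ≤ n := by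
    rw [← hV]
    exact Submodule.finrank_mono (sup_le inf_le_right inf_le_right)
  have hDpos : 1 ≤ finrank ℂ (U ⊓ V : Submodule ℂ H) := by
    rcases Nat.eq_zero_or_pos (finrank ℂ (U ⊓ V : Submodule ℂ H)) with h0 | h1
    · exact absurd (Submodule.finrank_eq_zero.mp h0) hUV
    · exact h1
  have hD1 : finrank ℂ (U ⊓ V : Submodule ℂ H) = 1 := by omega
  have hDSV : (U ⊓ V) ⊔ (Uᗮ ⊓ V) = V := by
    apply Submodule.eq_of_le_of_finrank_le (sup_le inf_le_right inf_le_right)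
    rw [hV]; omega
  refine ⟨hD1, ?_⟩
  intro x hx y hy _ hyD
  obtain ⟨d, hd, s, hs, hds⟩ := Submodule.mem_sup.mp (show y ∈ (U ⊓ V) ⊔ (Uᗮ ⊓ V) by rw [hDSV]; exact hy)
  have hsd : (inner ℂ s d : ℂ) = 0 :=
    Submodule.inner_left_of_mem_orthogonal (Submodule.mem_inf.mp hd).1
      (Submodule.mem_inf.mp hs).1
  have hdd : (inner ℂ d d : ℂ) = 0 := by
    have hyd : (inner ℂ y d : ℂ) = 0 := hyD d hd
    rw [← hds, inner_add_left, hsd, add_zero] at hyd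
    exact hyd
  have hd0 : d = 0 := inner_self_eq_zero.mp hdd
  have hyS : y ∈ Uᗮ ⊓ V := by rw [← hds, hd0, zero_add]; exact hs
  exact Submodule.inner_right_of_mem_orthogonal hx (Submodule.mem_inf.mp hyS).1

/-- The key necessity lemma: if `U # V` in an infinite-dimensional space, there exist
`n - 1` pairwise orthogonal `n`-dimensional subspaces, each orthogonal to `U` and
meeting `V` nontrivially. -/
lemma config_of_oneOrth [CompleteSpace H] (hH : ¬ FiniteDimensional ℂ H) {n : ℕ}
    (hn : 2 ≤ n) (U V : Submodule ℂ H) (hU : finrank ℂ U = n) (hV : finrank ℂ V = n)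
    (h : OneOrth U V) :
    ∃ Z : Fin (n - 1) → Submodule ℂ H, (∀ i, finrank ℂ (Z i) = n) ∧
      (∀ i, SubPerp (Z i) U) ∧ (∀ i, Z i ⊓ V ≠ ⊥) ∧
      ∀ i j, i ≠ j → SubPerp (Z i) (Z j) := by
  obtain ⟨n', rfl⟩ : ∃ n', n = n' + 1 := ⟨n - 1, by omega⟩
  haveI : FiniteDimensional ℂ U := FiniteDimensional.of_finrank_pos (by omega)
  haveI : FiniteDimensional ℂ V := FiniteDimensional.of_finrank_pos (by omega)
  set D : Submodule ℂ H := U ⊓ V with hDdef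
  haveI : FiniteDimensional ℂ D := Submodule.finiteDimensional_of_le (inf_le_left : D ≤ U)
  haveI := FiniteDimensional.complete ℂ D
  have hD1 : finrank ℂ D = 1 := h.1
  set B : Submodule ℂ H := Dᗮ ⊓ V with hBdef
  have hBV : B ≤ V := inf_le_right
  have hBrank : finrank ℂ B = n' :=
    Submodule.finrank_add_inf_finrank_orthogonal' (inf_le_right : D ≤ V)
      (by rw [hD1, hV]; omega)
  have hBU : B ≤ Uᗮ := by
    rintro b hb
    obtain ⟨hbD, hbV⟩ := Submodule.mem_inf.mp hb
    rw [Submodule.mem_orthogonal]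
    intro u hu
    rw [← Submodule.sup_orthogonal_inf_of_hasOrthogonalProjection (inf_le_left : D ≤ U)] at hu
    obtain ⟨d, hd, a, ha, rfl⟩ := Submodule.mem_sup.mp hu
    obtain ⟨haD, haU⟩ := Submodule.mem_inf.mp ha
    have h1 : (inner ℂ d b : ℂ) = 0 := Submodule.inner_right_of_mem_orthogonal hd hbD
    have h2 : (inner ℂ a b : ℂ) = 0 :=
      h.2 a haU b hbV (fun z hz => Submodule.inner_left_of_mem_orthogonal hz haD)
        (fun z hz => Submodule.inner_left_of_mem_orthogonal hz hbD)
    rw [inner_add_left, h1, h2, add_zero]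
  haveI : FiniteDimensional ℂ B := Submodule.finiteDimensional_of_le hBV
  obtain ⟨bv, hbv, hbvB⟩ := exists_orthonormal_fin B hBrank
  -- fresh orthonormal vectors orthogonal to U ⊔ V
  have hKo : ¬ FiniteDimensional ℂ ((U ⊔ V)ᗮ : Submodule ℂ H) := by
    intro hfin
    apply hH
    haveI : FiniteDimensional ℂ ((U ⊔ V : Submodule ℂ H)) := inferInstance
    haveI := FiniteDimensional.complete ℂ ((U ⊔ V : Submodule ℂ H))
    have htop : (U ⊔ V) ⊔ (U ⊔ V)ᗮ = (⊤ : Submodule ℂ H) :=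
      Submodule.sup_orthogonal_of_hasOrthogonalProjection
    haveI : FiniteDimensional ℂ (((U ⊔ V) ⊔ (U ⊔ V)ᗮ : Submodule ℂ H)) := inferInstance
    haveI : FiniteDimensional ℂ ((⊤ : Submodule ℂ H)) := htop ▸ this
    exact (Submodule.topEquiv : (⊤ : Submodule ℂ H) ≃ₗ[ℂ] H).finiteDimensional
  obtain ⟨fv, hfv, hfvK⟩ := exists_orthonormal_fin' ((U ⊔ V)ᗮ) hKo (n' * n')
  set f2 : Fin n' × Fin n' → H := fun p => fv (finProdFinEquiv p) with hf2def
  have hf2 : Orthonormal ℂ f2 := hfv.comp _ (finProdFinEquiv.injective)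
  have hf2K : ∀ p, f2 p ∈ (U ⊔ V)ᗮ := fun p => hfvK _
  have hcross : ∀ i p, (inner ℂ (bv i) (f2 p) : ℂ) = 0 := fun i p =>
    Submodule.inner_right_of_mem_orthogonal (Submodule.mem_sup_right (hBV (hbvB i))) (hf2K p)
  have hcross' : ∀ p i, (inner ℂ (f2 p) (bv i) : ℂ) = 0 := fun p i => by
    rw [inner_eq_zero_symm]; exact hcross i p
  have hbvite := orthonormal_iff_ite.mp hbv
  have hf2ite := orthonormal_iff_ite.mp hf2
  -- the subspaces
  set c : Fin n' → Fin (n' + 1) → H :=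
    fun i => Fin.cons (bv i) (fun k => f2 (i, k)) with hcdef
  have hcinner : ∀ i j a b, (inner ℂ (c i a) (c j b) : ℂ) =
      if (a = 0 ∧ b = 0 ∧ i = j) ∨
        (∃ a' b', a = Fin.succ a' ∧ b = Fin.succ b' ∧ i = j ∧ a' = b') then 1 else 0 := by
    intro i j a b
    induction a using Fin.cases with
    | zero =>
      induction b using Fin.cases with
      | zero =>
        simp only [hcdef, Fin.cons_zero]
        rw [hbvite i j]
        congr 1
        simp [eq_comm, (Fin.succ_ne_zero _).symm]
      | succ b =>
        simp only [hcdef, Fin.cons_zero, Fin.cons_succ]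
        rw [hcross i (j, b), if_neg]
        rintro (⟨-, hb, -⟩ | ⟨a', b', ha', -, -, -⟩)
        · exact (Fin.succ_ne_zero b) hb
        · exact (Fin.succ_ne_zero a') ha'.symm
    | succ a =>
      induction b using Fin.cases with
      | zero =>
        simp only [hcdef, Fin.cons_zero, Fin.cons_succ]
        rw [hcross' (i, a) j, if_neg]
        rintro (⟨ha, -, -⟩ | ⟨a', b', -, hb', -, -⟩)
        · exact (Fin.succ_ne_zero a) ha
        · exact (Fin.succ_ne_zero b') hb'.symm
      | succ b =>
        simp only [hcdef, Fin.cons_succ]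
        rw [hf2ite (i, a) (j, b)]
        congr 1
        simp only [Prod.mk.injEq, eq_iff_iff]
        constructor
        · rintro ⟨hij, hab⟩
          exact Or.inr ⟨a, b, rfl, rfl, hij, hab⟩
        · rintro (⟨ha, -, -⟩ | ⟨a', b', ha', hb', hij, hab⟩)
          · exact absurd ha (Fin.succ_ne_zero a)
          · refine ⟨hij, ?_⟩
            have ha'' : a = a' := Fin.succ_injective _ ha'
            have hb'' : b = b' := Fin.succ_injective _ hb'
            rw [ha'', hb'', hab]
  have hcon : ∀ i, Orthonormal ℂ (c i) := by
    intro i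
    rw [orthonormal_iff_ite]
    intro a b
    rw [hcinner i i a b]
    congr 1
    simp only [eq_iff_iff]
    constructor
    · rintro (⟨ha, hb, -⟩ | ⟨a', b', ha', hb', -, hab⟩)
      · rw [ha, hb]
      · rw [ha', hb', hab]
    · rintro rfl
      induction a using Fin.cases with
      | zero => exact Or.inl ⟨by trivial, by trivial, by trivial⟩
      | succ a =>
        exact Or.inr ⟨a, a, by trivial, by trivial, by trivial, by trivial⟩
  set Z : Fin n' → Submodule ℂ H := fun i => Submodule.span ℂ (Set.range (c i)) with hZdef
  have hZle : ∀ i, Z i ≤ Uᗮ := by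
    intro i
    rw [hZdef]
    apply span_le.mpr
    rintro _ ⟨t, rfl⟩
    induction t using Fin.cases with
    | zero =>
      simpa only [hcdef, Fin.cons_zero, SetLike.mem_coe] using hBU (hbvB i)
    | succ k =>
      simp only [hcdef, Fin.cons_succ]
      exact Submodule.orthogonal_le le_sup_left (hf2K (i, k))
  refine ⟨Z, ?_, ?_, ?_, ?_⟩
  · intro i
    rw [hZdef, finrank_span_eq_card (hcon i).linearIndependent, Fintype.card_fin]
  · intro i
    exact subPerp_symm (subPerp_of_le_orthogonal (hZle i))
  · intro i
    rw [Submodule.ne_bot_iff]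
    refine ⟨bv i, Submodule.mem_inf.mpr ⟨?_, hBV (hbvB i)⟩, hbv.ne_zero i⟩
    exact subset_span ⟨0, by simp [hcdef, Fin.cons_zero]⟩
  · intro i j hij
    have hZZ : Z i ⟂ Z j := by
      rw [hZdef]
      apply Submodule.isOrtho_span.mpr
      rintro _ ⟨a, rfl⟩ _ ⟨b, rfl⟩
      rw [hcinner i j a b, if_neg]
      rintro (⟨-, -, hijeq⟩ | ⟨a', b', -, -, hijeq, -⟩) <;> exact hij hijeq
    exact Submodule.isOrtho_iff_inner_eq.mp hZZ

end Aux

/-- If `H` is infinite-dimensional, `n ≥ 2`, and `φ : P_n(H) → P_n(H)` preserves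
orthogonality and trivial intersection in both directions, then `φ` preserves
1-orthogonality. -/
theorem oneOrth_preserved
    {H : Type*} [NormedAddCommGroup H] [InnerProductSpace ℂ H] [CompleteSpace H]
    (hH : ¬ FiniteDimensional ℂ H)
    (n : ℕ) (hn : 2 ≤ n)
    (φ : {U : Submodule ℂ H // Module.finrank ℂ U = n} →
         {U : Submodule ℂ H // Module.finrank ℂ U = n})
    (hperp : ∀ U V, SubPerp U.1 V.1 ↔ SubPerp (φ U).1 (φ V).1)
    (hint : ∀ U V, U.1 ⊓ V.1 = ⊥ ↔ (φ U).1 ⊓ (φ V).1 = ⊥) :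
    ∀ U V, OneOrth U.1 V.1 → OneOrth (φ U).1 (φ V).1 := by
  intro U V h
  have hbot : U.1 ⊓ V.1 ≠ ⊥ := by
    intro hb
    have h1 := h.1
    rw [hb] at h1
    simpa using h1
  obtain ⟨Z, hZr, hZU, hZV, hZZ⟩ := config_of_oneOrth hH hn U.1 V.1 U.2 V.2 h
  let Z' : Fin (n - 1) → {W : Submodule ℂ H // Module.finrank ℂ W = n} :=
    fun i => ⟨Z i, hZr i⟩
  exact oneOrth_of_config hn (φ U).1 (φ V).1 (φ U).2 (φ V).2
    (fun hb => hbot ((hint U V).mpr hb))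
    (fun i => (φ (Z' i)).1)
    (fun i => (hperp (Z' i) U).mp (hZU i))
    (fun i hb => hZV i ((hint (Z' i) V).mpr hb))
    (fun i j hij => (hperp (Z' i) (Z' j)).mp (hZZ i j hij))
end

section
/- Let H be an infinite-dimensional complex Hilbert space, n ≥ 2 an integer, and φ : P_n(H) → P_n(H) a map such that for every pair U, V ∈ P_n(H): U ⊥ V if and only if φ(U) ⊥ φ(V), and U ∩ V = {0} if and only if φ(U) ∩ φ(V) = {0}. Then for all U, V, W ∈ P_n(H) satisfying U # V, U # W, V # W and U ∩ V = U ∩ W = V ∩ W, one has φ(U) # φ(V), φ(U) # φ(W), φ(V) # φ(W), and φ(U) ∩ φ(V) = φ(U) ∩ φ(W) = φ(V) ∩ φ(W). -/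
set_option maxHeartbeats 1000000
set_option linter.unusedSectionVars false


section Aux

open Module Submodule

variable {H : Type*} [NormedAddCommGroup H] [InnerProductSpace ℂ H] [CompleteSpace H]

local notation "⟪" x ", " y "⟫" => (inner ℂ x y : ℂ)

/-- `OneOrth` is symmetric. -/
lemma oneOrth_symm {U V : Submodule ℂ H} (h : OneOrth U V) : OneOrth V U := by
  refine ⟨by rw [inf_comm]; exact h.1, ?_⟩
  intro x hx y hy hxz hyz
  have := h.2 y hy x hx
    (fun z hz => hyz z (Submodule.mem_inf.2 ⟨(Submodule.mem_inf.1 hz).2, (Submodule.mem_inf.1 hz).1⟩))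
    (fun z hz => hxz z (Submodule.mem_inf.2 ⟨(Submodule.mem_inf.1 hz).2, (Submodule.mem_inf.1 hz).1⟩))
  exact inner_eq_zero_symm.1 this

lemma subPerp_of_le {X Y : Submodule ℂ H} (h : X ≤ Yᗮ) : SubPerp X Y :=
  fun x hx y hy => Submodule.inner_left_of_mem_orthogonal hy (h hx)

lemma le_orth_of_le_orth {S P : Submodule ℂ H} (h : S ≤ Pᗮ) : P ≤ Sᗮ :=
  (Submodule.le_orthogonal_orthogonal P).trans (Submodule.orthogonal_le h)

/-- In an infinite-dimensional Hilbert space one can find arbitrarily many orthonormal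
vectors orthogonal to a given finite-dimensional subspace. -/
lemma exists_fresh (hH : ¬ FiniteDimensional ℂ H) :
    ∀ (m : ℕ) (F : Submodule ℂ H), FiniteDimensional ℂ F →
      ∃ f : Fin m → H, Orthonormal ℂ f ∧ ∀ i, f i ∈ Fᗮ := by
  intro m
  induction m with
  | zero =>
      intro F _
      exact ⟨fun i => 0, ⟨fun i => i.elim0, fun i j _ => i.elim0⟩, fun i => i.elim0⟩
  | succ m ih =>
      intro F hF
      haveI := hF
      have hne : Fᗮ ≠ ⊥ := by
        intro hbot
        apply hH
        have h1 : F ⊔ Fᗮ = ⊤ := Submodule.sup_orthogonal_of_hasOrthogonalProjection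
        rw [hbot, sup_bot_eq] at h1
        haveI : FiniteDimensional ℂ (⊤ : Submodule ℂ H) := h1 ▸ hF
        exact Module.Finite.equiv Submodule.topEquiv
      obtain ⟨x, hx, hx0⟩ := Submodule.exists_mem_ne_zero_of_ne_bot hne
      obtain ⟨f, hf, hfmem⟩ := ih (F ⊔ Submodule.span ℂ {x}) inferInstance
      have hxs : x ∈ F ⊔ Submodule.span ℂ {x} :=
        (le_sup_right : Submodule.span ℂ {x} ≤ _) (Submodule.mem_span_singleton_self x)
      have hxn : ‖(‖x‖⁻¹ : ℂ) • x‖ = 1 := by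
        rw [norm_smul]
        simp [norm_inv, norm_ne_zero_iff.2 hx0]
      refine ⟨Fin.cons ((‖x‖⁻¹ : ℂ) • x) f, ⟨?_, ?_⟩, ?_⟩
      · intro i
        induction i using Fin.cases with
        | zero => simpa using hxn
        | succ i => simpa using hf.1 i
      · intro i j hij
        induction i using Fin.cases with
        | zero =>
            induction j using Fin.cases with
            | zero => exact absurd rfl hij
            | succ j =>
                simp only [Fin.cons_zero, Fin.cons_succ]
                rw [inner_smul_left]
                have : ⟪x, f j⟫ = 0 :=
                  Submodule.inner_right_of_mem_orthogonal hxs (hfmem j)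
                rw [this, mul_zero]
        | succ i =>
            induction j using Fin.cases with
            | zero =>
                simp only [Fin.cons_zero, Fin.cons_succ]
                rw [inner_smul_right]
                have : ⟪f i, x⟫ = 0 :=
                  Submodule.inner_left_of_mem_orthogonal hxs (hfmem i)
                rw [this, mul_zero]
            | succ j =>
                simp only [Fin.cons_succ]
                exact hf.2 (fun h => hij (by rw [h]))
      · intro i
        induction i using Fin.cases with
        | zero =>
            simp only [Fin.cons_zero]
            exact Submodule.smul_mem _ _ hx
        | succ i =>
            simp only [Fin.cons_succ]
            exact Submodule.orthogonal_le le_sup_left (hfmem i)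


/-- Construction of the witness subspaces in the source space. -/
lemma exists_witnesses (hH : ¬ FiniteDimensional ℂ H)
    (M P Q A : Submodule ℂ H) [FiniteDimensional ℂ M] [FiniteDimensional ℂ P]
    [FiniteDimensional ℂ Q]
    (hAM : A ≤ M) (hAP : A ≤ Pᗮ) (hAQ : A ≤ Qᗮ) (k : ℕ) (hA : Module.finrank ℂ A = k) :
    ∃ X : Fin k → Submodule ℂ H,
      (∀ i, Module.finrank ℂ (X i) = k + 1) ∧
      (∀ i j, i ≠ j → SubPerp (X i) (X j)) ∧
      (∀ i, SubPerp (X i) P) ∧ (∀ i, SubPerp (X i) Q) ∧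
      (∀ i, X i ⊓ M ≠ ⊥) := by
  haveI : FiniteDimensional ℂ A := Submodule.finiteDimensional_of_le hAM
  let b := (stdOrthonormalBasis ℂ A).reindex (finCongr (by rw [hA]))
  let a : Fin k → H := fun i => (b i : H)
  have haA : ∀ i, a i ∈ A := fun i => (b i).2
  have ha : Orthonormal ℂ a :=
    b.orthonormal.comp_linearIsometry A.subtypeₗᵢ
  have ha0 : ∀ i, a i ≠ 0 := fun i h => by
    have := ha.1 i; rw [h, norm_zero] at this; norm_num at this
  obtain ⟨f0, hf0, hf0mem⟩ := exists_fresh hH (k * k) (M ⊔ P ⊔ Q) inferInstance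
  let f : Fin k → Fin k → H := fun i j => f0 (finProdFinEquiv (i, j))
  have hfmem : ∀ i j, f i j ∈ (M ⊔ P ⊔ Q)ᗮ := fun i j => hf0mem _
  have hMsup : M ≤ M ⊔ P ⊔ Q := le_sup_left.trans le_sup_left
  have hPsup : P ≤ M ⊔ P ⊔ Q := le_sup_right.trans le_sup_left
  have hQsup : Q ≤ M ⊔ P ⊔ Q := le_sup_right
  have haf : ∀ i i' j, ⟪a i, f i' j⟫ = 0 :=
    fun i i' j => Submodule.inner_right_of_mem_orthogonal (hMsup (hAM (haA i))) (hfmem i' j)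
  have hfa : ∀ i j i', ⟪f i j, a i'⟫ = 0 :=
    fun i j i' => Submodule.inner_left_of_mem_orthogonal (hMsup (hAM (haA i'))) (hfmem i j)
  have hff : ∀ i j i' j', (i, j) ≠ (i', j') → ⟪f i j, f i' j'⟫ = 0 := by
    intro i j i' j' hne
    exact hf0.2 (fun h => hne (finProdFinEquiv.injective h))
  let g : Fin k → Fin (k + 1) → H := fun i => Fin.cons (a i) (f i)
  have hg : ∀ i, Orthonormal ℂ (g i) := by
    intro i
    constructor
    · intro l
      induction l using Fin.cases with
      | zero => simpa [g] using ha.1 i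
      | succ l => simpa [g] using hf0.1 _
    · intro l m hlm
      induction l using Fin.cases with
      | zero =>
          induction m using Fin.cases with
          | zero => exact absurd rfl hlm
          | succ m => simpa [g] using haf i i m
      | succ l =>
          induction m using Fin.cases with
          | zero => simpa [g] using hfa i l i
          | succ m =>
              have : (i, l) ≠ (i, m) := by
                intro h
                exact hlm (congrArg Fin.succ (Prod.ext_iff.1 h).2)
              simpa [g] using hff i l i m this
  have hgcross : ∀ i j, i ≠ j → ∀ l m, ⟪g i l, g j m⟫ = 0 := by
    intro i j hij l m
    induction l using Fin.cases with
    | zero =>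
        induction m using Fin.cases with
        | zero => simpa [g] using ha.2 hij
        | succ m => simpa [g] using haf i j m
    | succ l =>
        induction m using Fin.cases with
        | zero => simpa [g] using hfa i l j
        | succ m =>
            have : (i, l) ≠ (j, m) := by
              intro h; exact hij (Prod.ext_iff.1 h).1
            simpa [g] using hff i l j m this
  refine ⟨fun i => Submodule.span ℂ (Set.range (g i)), ?_, ?_, ?_, ?_, ?_⟩
  · intro i
    rw [finrank_span_eq_card (hg i).linearIndependent]
    simp
  · intro i j hij
    have horth : Submodule.span ℂ (Set.range (g i)) ⟂ Submodule.span ℂ (Set.range (g j)) :=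
      Submodule.isOrtho_span.2 (by rintro _ ⟨l, rfl⟩ _ ⟨m, rfl⟩; exact hgcross i j hij l m)
    exact subPerp_of_le horth
  · intro i
    apply subPerp_of_le
    rw [Submodule.span_le]
    rintro _ ⟨l, rfl⟩
    induction l using Fin.cases with
    | zero => exact hAP (haA i)
    | succ l => exact Submodule.orthogonal_le hPsup (hfmem i l)
  · intro i
    apply subPerp_of_le
    rw [Submodule.span_le]
    rintro _ ⟨l, rfl⟩
    induction l using Fin.cases with
    | zero => exact hAQ (haA i)
    | succ l => exact Submodule.orthogonal_le hQsup (hfmem i l)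
  · intro i
    rw [Submodule.ne_bot_iff]
    refine ⟨a i, Submodule.mem_inf.2 ⟨?_, hAM (haA i)⟩, ha0 i⟩
    exact Submodule.subset_span ⟨0, by simp [g]⟩

/-- Span of an orthogonal family of nonzero vectors lying in three given submodules. -/
lemma span_orthofam {P1 P2 P3 : Submodule ℂ H} {k : ℕ} (u : Fin k → H)
    (h0 : ∀ i, u i ≠ 0) (hP1 : ∀ i, u i ∈ P1) (hP2 : ∀ i, u i ∈ P2) (hP3 : ∀ i, u i ∈ P3)
    (huu : ∀ i j, i ≠ j → ⟪u i, u j⟫ = 0) :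
    ∃ S : Submodule ℂ H, Module.finrank ℂ S = k ∧ S ≤ P1 ∧ S ≤ P2 ∧ S ≤ P3 := by
  let u' : Fin k → H := fun i => (‖u i‖⁻¹ : ℂ) • u i
  have hu' : Orthonormal ℂ u' := by
    constructor
    · intro i
      rw [norm_smul]
      simp [u', norm_inv, norm_ne_zero_iff.2 (h0 i)]
    · intro i j hij
      simp only [u', inner_smul_left, inner_smul_right]
      rw [huu i j hij, mul_zero, mul_zero]
  have hmem : ∀ (P : Submodule ℂ H), (∀ i, u i ∈ P) → ∀ i, u' i ∈ P :=
    fun P hP i => Submodule.smul_mem _ _ (hP i)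
  refine ⟨Submodule.span ℂ (Set.range u'), ?_, ?_, ?_, ?_⟩
  · rw [finrank_span_eq_card hu'.linearIndependent]; simp
  all_goals
    rw [Submodule.span_le]; rintro _ ⟨i, rfl⟩
  · exact hmem _ hP1 i
  · exact hmem _ hP2 i
  · exact hmem _ hP3 i

/-- The key dimension lemma: if `U ⊓ V ≠ ⊥` and `T` is a `k`-dimensional subspace of
`V` orthogonal to `U`, with `dim U = dim V = k + 1`, then `dim (U ⊓ V) = 1` and
`V = (U ⊓ V) ⊔ T`. -/
lemma key_lemma {U V T : Submodule ℂ H} {k : ℕ}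
    [FiniteDimensional ℂ U] [FiniteDimensional ℂ V]
    (hV : Module.finrank ℂ V = k + 1)
    (hUV : U ⊓ V ≠ ⊥) (hTV : T ≤ V) (hTU : T ≤ Uᗮ) (hT : Module.finrank ℂ T = k) :
    Module.finrank ℂ (U ⊓ V : Submodule ℂ H) = 1 ∧ (U ⊓ V) ⊔ T = V := by
  haveI : FiniteDimensional ℂ (U ⊓ V : Submodule ℂ H) :=
    Submodule.finiteDimensional_of_le inf_le_left
  haveI : FiniteDimensional ℂ T := Submodule.finiteDimensional_of_le hTV
  have hdisj : (U ⊓ V) ⊓ T = ⊥ := by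
    rw [← le_bot_iff]
    refine le_trans (inf_le_inf (inf_le_left : U ⊓ V ≤ U) hTU) ?_
    rw [Submodule.inf_orthogonal_eq_bot]
  have hsum := Submodule.finrank_sup_add_finrank_inf_eq (U ⊓ V) T
  rw [hdisj, finrank_bot, add_zero, hT] at hsum
  have hle : (U ⊓ V) ⊔ T ≤ V := sup_le inf_le_right hTV
  have hmono : Module.finrank ℂ (((U ⊓ V) ⊔ T : Submodule ℂ H)) ≤ k + 1 := by
    rw [← hV]; exact Submodule.finrank_mono hle
  have hpos : Module.finrank ℂ (U ⊓ V : Submodule ℂ H) ≠ 0 := by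
    intro h; exact hUV (Submodule.finrank_eq_zero.1 h)
  have h1 : Module.finrank ℂ (U ⊓ V : Submodule ℂ H) = 1 := by omega
  refine ⟨h1, Submodule.eq_of_le_of_finrank_eq hle ?_⟩
  rw [hV]
  omega

/-- Full `OneOrth` from the witness data. -/
lemma oneOrth_target {U V T : Submodule ℂ H} {k : ℕ}
    [FiniteDimensional ℂ U] [FiniteDimensional ℂ V]
    (hV : Module.finrank ℂ V = k + 1)
    (hUV : U ⊓ V ≠ ⊥) (hTV : T ≤ V) (hTU : T ≤ Uᗮ) (hT : Module.finrank ℂ T = k) :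
    OneOrth U V := by
  obtain ⟨hfr, hsup⟩ := key_lemma hV hUV hTV hTU hT
  refine ⟨hfr, ?_⟩
  intro x hx y hy _ hyz
  have hy' : y ∈ (U ⊓ V) ⊔ T := by rw [hsup]; exact hy
  obtain ⟨l, hl, t, ht, rfl⟩ := Submodule.mem_sup.1 hy'
  have hlt : ⟪t, l⟫ = 0 :=
    Submodule.inner_left_of_mem_orthogonal (Submodule.mem_inf.1 hl).1 (hTU ht)
  have h0 : ⟪l + t, l⟫ = 0 := hyz l hl
  rw [inner_add_left, hlt, add_zero] at h0
  have hl0 : l = 0 := inner_self_eq_zero.1 h0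
  rw [hl0, zero_add]
  exact Submodule.inner_right_of_mem_orthogonal hx (hTU ht)

/-- The two lines obtained by splitting off the same `T` coincide. -/
lemma line_eq {La Lb T M : Submodule ℂ H} {k : ℕ} [FiniteDimensional ℂ M]
    (ha : La ⊔ T = M) (hb : Lb ⊔ T = M) (haT : La ≤ Tᗮ) (hbT : Lb ≤ Tᗮ)
    (hLa : Module.finrank ℂ La = 1) (hLb : Module.finrank ℂ Lb = 1)
    (hT : Module.finrank ℂ T = k) (hM : Module.finrank ℂ M = k + 1) : La = Lb := by
  have hTM : T ≤ M := le_sup_right.trans ha.le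
  have haM : La ≤ M := le_sup_left.trans ha.le
  have hbM : Lb ≤ M := le_sup_left.trans hb.le
  haveI : FiniteDimensional ℂ T := Submodule.finiteDimensional_of_le hTM
  set m := M ⊓ Tᗮ with hm
  haveI : FiniteDimensional ℂ m := Submodule.finiteDimensional_of_le inf_le_left
  have ham : La ≤ m := le_inf haM haT
  have hbm : Lb ≤ m := le_inf hbM hbT
  have hsupm : m ⊔ T = M := by
    apply le_antisymm (sup_le inf_le_left hTM)
    calc M = La ⊔ T := ha.symm
    _ ≤ m ⊔ T := sup_le_sup_right ham T
  have hdisj : m ⊓ T = ⊥ := by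
    rw [← le_bot_iff]
    refine le_trans (inf_le_inf (inf_le_right : m ≤ Tᗮ) le_rfl) ?_
    rw [inf_comm, Submodule.inf_orthogonal_eq_bot]
  have hsum := Submodule.finrank_sup_add_finrank_inf_eq m T
  rw [hdisj, finrank_bot, add_zero, hsupm, hM, hT] at hsum
  have hmr : Module.finrank ℂ m = 1 := by omega
  have h1 : La = m := Submodule.eq_of_le_of_finrank_eq ham (by rw [hLa, hmr])
  have h2 : Lb = m := Submodule.eq_of_le_of_finrank_eq hbm (by rw [hLb, hmr])
  rw [h1, h2]

/-- The orthogonal complement of the common line within `U` is orthogonal to `V`. -/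
lemma compl_perp {U V : Submodule ℂ H} [FiniteDimensional ℂ U] [FiniteDimensional ℂ V]
    (h : OneOrth U V) : (U ⊓ V)ᗮ ⊓ U ≤ Vᗮ := by
  intro x hx
  rw [Submodule.mem_orthogonal]
  intro y hy
  haveI : FiniteDimensional ℂ (U ⊓ V : Submodule ℂ H) :=
    Submodule.finiteDimensional_of_le inf_le_left
  have hdec := Submodule.sup_orthogonal_inf_of_hasOrthogonalProjection (inf_le_right : U ⊓ V ≤ V)
  rw [← hdec] at hy
  obtain ⟨l, hl, t, ht, rfl⟩ := Submodule.mem_sup.1 hy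
  have h1 : ⟪l, x⟫ = 0 :=
    Submodule.inner_right_of_mem_orthogonal hl (Submodule.mem_inf.1 hx).1
  have h2 : ⟪x, t⟫ = 0 := by
    refine h.2 x (Submodule.mem_inf.1 hx).2 t (Submodule.mem_inf.1 ht).2 ?_ ?_
    · intro z hz
      exact Submodule.inner_left_of_mem_orthogonal hz (Submodule.mem_inf.1 hx).1
    · intro z hz
      exact Submodule.inner_left_of_mem_orthogonal hz (Submodule.mem_inf.1 ht).1
  have h2' : ⟪t, x⟫ = 0 := inner_eq_zero_symm.1 h2
  rw [inner_add_left, h1, h2', add_zero]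

end Aux

/-- If `H` is infinite-dimensional, `n ≥ 2`, and `φ : P_n(H) → P_n(H)` preserves
orthogonality and trivial intersection in both directions, then `φ` preserves triples of
pairwise 1-orthogonal subspaces with common pairwise intersection. -/
theorem oneOrth_triple_preserved
    {H : Type*} [NormedAddCommGroup H] [InnerProductSpace ℂ H] [CompleteSpace H]
    (hH : ¬ FiniteDimensional ℂ H)
    (n : ℕ) (hn : 2 ≤ n)
    (φ : {U : Submodule ℂ H // Module.finrank ℂ U = n} →
         {U : Submodule ℂ H // Module.finrank ℂ U = n})
    (hperp : ∀ U V, SubPerp U.1 V.1 ↔ SubPerp (φ U).1 (φ V).1)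
    (hint : ∀ U V, U.1 ⊓ V.1 = ⊥ ↔ (φ U).1 ⊓ (φ V).1 = ⊥) :
    ∀ U V W, OneOrth U.1 V.1 → OneOrth U.1 W.1 → OneOrth V.1 W.1 →
      U.1 ⊓ V.1 = U.1 ⊓ W.1 → U.1 ⊓ W.1 = V.1 ⊓ W.1 →
      OneOrth (φ U).1 (φ V).1 ∧ OneOrth (φ U).1 (φ W).1 ∧ OneOrth (φ V).1 (φ W).1 ∧
      (φ U).1 ⊓ (φ V).1 = (φ U).1 ⊓ (φ W).1 ∧
      (φ U).1 ⊓ (φ W).1 = (φ V).1 ⊓ (φ W).1 := by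
  intro U V W h1 h2 h3 e1 e2
  obtain ⟨k, hk⟩ : ∃ k, n = k + 1 := ⟨n - 1, by omega⟩
  haveI fdU : FiniteDimensional ℂ U.1 := .of_finrank_pos (by rw [U.2]; omega)
  haveI fdV : FiniteDimensional ℂ V.1 := .of_finrank_pos (by rw [V.2]; omega)
  haveI fdW : FiniteDimensional ℂ W.1 := .of_finrank_pos (by rw [W.2]; omega)
  haveI fdU' : FiniteDimensional ℂ (φ U).1 := .of_finrank_pos (by rw [(φ U).2]; omega)
  haveI fdV' : FiniteDimensional ℂ (φ V).1 := .of_finrank_pos (by rw [(φ V).2]; omega)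
  haveI fdW' : FiniteDimensional ℂ (φ W).1 := .of_finrank_pos (by rw [(φ W).2]; omega)
  have hfrU' : Module.finrank ℂ (φ U).1 = k + 1 := (φ U).2.trans hk
  have hfrV' : Module.finrank ℂ (φ V).1 = k + 1 := (φ V).2.trans hk
  have hfrW' : Module.finrank ℂ (φ W).1 = k + 1 := (φ W).2.trans hk
  -- the common line in the source
  have hVU : V.1 ⊓ U.1 = U.1 ⊓ V.1 := inf_comm _ _
  have hVW : V.1 ⊓ W.1 = U.1 ⊓ V.1 := by rw [← e2, ← e1]
  have hWU : W.1 ⊓ U.1 = U.1 ⊓ V.1 := by rw [inf_comm]; exact e1.symm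
  have hWV : W.1 ⊓ V.1 = U.1 ⊓ V.1 := by rw [inf_comm]; exact hVW
  -- orthogonality of the complements to the other two subspaces
  have hAV : (U.1 ⊓ V.1)ᗮ ⊓ U.1 ≤ V.1ᗮ := compl_perp h1
  have hAW : (U.1 ⊓ V.1)ᗮ ⊓ U.1 ≤ W.1ᗮ := by
    have := compl_perp h2
    rwa [← e1] at this
  have hBU : (U.1 ⊓ V.1)ᗮ ⊓ V.1 ≤ U.1ᗮ := by
    have := compl_perp (oneOrth_symm h1)
    rwa [hVU] at this
  have hBW : (U.1 ⊓ V.1)ᗮ ⊓ V.1 ≤ W.1ᗮ := by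
    have := compl_perp h3
    rwa [hVW] at this
  have hCU : (U.1 ⊓ V.1)ᗮ ⊓ W.1 ≤ U.1ᗮ := by
    have := compl_perp (oneOrth_symm h2)
    rwa [hWU] at this
  have hCV : (U.1 ⊓ V.1)ᗮ ⊓ W.1 ≤ V.1ᗮ := by
    have := compl_perp (oneOrth_symm h3)
    rwa [hWV] at this
  -- dimensions of the complements
  have hl1 : Module.finrank ℂ (U.1 ⊓ V.1 : Submodule ℂ H) = 1 := h1.1
  have frA : Module.finrank ℂ ((U.1 ⊓ V.1)ᗮ ⊓ U.1 : Submodule ℂ H) = k := by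
    have := Submodule.finrank_add_inf_finrank_orthogonal (inf_le_left : U.1 ⊓ V.1 ≤ U.1)
    rw [hl1, U.2] at this
    omega
  have frB : Module.finrank ℂ ((U.1 ⊓ V.1)ᗮ ⊓ V.1 : Submodule ℂ H) = k := by
    have := Submodule.finrank_add_inf_finrank_orthogonal (inf_le_right : U.1 ⊓ V.1 ≤ V.1)
    rw [hl1, V.2] at this
    omega
  have hlW : U.1 ⊓ V.1 ≤ W.1 := e1.le.trans inf_le_right
  have frC : Module.finrank ℂ ((U.1 ⊓ V.1)ᗮ ⊓ W.1 : Submodule ℂ H) = k := by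
    have := Submodule.finrank_add_inf_finrank_orthogonal hlW
    rw [hl1, W.2] at this
    omega
  -- witnesses in the source space
  obtain ⟨X, hXr, hXX, hXP, hXQ, hXM⟩ :=
    exists_witnesses hH U.1 V.1 W.1 ((U.1 ⊓ V.1)ᗮ ⊓ U.1) inf_le_right hAV hAW k frA
  obtain ⟨Y, hYr, hYY, hYP, hYQ, hYM⟩ :=
    exists_witnesses hH V.1 U.1 W.1 ((U.1 ⊓ V.1)ᗮ ⊓ V.1) inf_le_right hBU hBW k frB
  obtain ⟨Z, hZr, hZZ, hZP, hZQ, hZM⟩ :=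
    exists_witnesses hH W.1 U.1 V.1 ((U.1 ⊓ V.1)ᗮ ⊓ W.1) inf_le_right hCU hCV k frC
  let Xs : Fin k → {S : Submodule ℂ H // Module.finrank ℂ S = n} :=
    fun i => ⟨X i, (hXr i).trans hk.symm⟩
  let Ys : Fin k → {S : Submodule ℂ H // Module.finrank ℂ S = n} :=
    fun i => ⟨Y i, (hYr i).trans hk.symm⟩
  let Zs : Fin k → {S : Submodule ℂ H // Module.finrank ℂ S = n} :=
    fun i => ⟨Z i, (hZr i).trans hk.symm⟩
  -- families of orthogonal vectors in the image
  have hXne : ∀ i, (φ (Xs i)).1 ⊓ (φ U).1 ≠ ⊥ := fun i hbot => hXM i ((hint (Xs i) U).2 hbot)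
  have hYne : ∀ i, (φ (Ys i)).1 ⊓ (φ V).1 ≠ ⊥ := fun i hbot => hYM i ((hint (Ys i) V).2 hbot)
  have hZne : ∀ i, (φ (Zs i)).1 ⊓ (φ W).1 ≠ ⊥ := fun i hbot => hZM i ((hint (Zs i) W).2 hbot)
  choose u hu1 hu2 using fun i => Submodule.exists_mem_ne_zero_of_ne_bot (hXne i)
  choose v hv1 hv2 using fun i => Submodule.exists_mem_ne_zero_of_ne_bot (hYne i)
  choose w hw1 hw2 using fun i => Submodule.exists_mem_ne_zero_of_ne_bot (hZne i)
  obtain ⟨SU, frSU, hSU1, hSU2, hSU3⟩ :=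
    span_orthofam (P1 := (φ U).1) (P2 := (φ V).1ᗮ) (P3 := (φ W).1ᗮ) u hu2
      (fun i => (Submodule.mem_inf.1 (hu1 i)).2)
      (fun i => by
        rw [Submodule.mem_orthogonal']
        intro y hy
        exact ((hperp (Xs i) V).1 (hXP i)) (u i) (Submodule.mem_inf.1 (hu1 i)).1 y hy)
      (fun i => by
        rw [Submodule.mem_orthogonal']
        intro y hy
        exact ((hperp (Xs i) W).1 (hXQ i)) (u i) (Submodule.mem_inf.1 (hu1 i)).1 y hy)
      (fun i j hij =>
        ((hperp (Xs i) (Xs j)).1 (hXX i j hij)) (u i) (Submodule.mem_inf.1 (hu1 i)).1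
          (u j) (Submodule.mem_inf.1 (hu1 j)).1)
  obtain ⟨SV, frSV, hSV1, hSV2, hSV3⟩ :=
    span_orthofam (P1 := (φ V).1) (P2 := (φ U).1ᗮ) (P3 := (φ W).1ᗮ) v hv2
      (fun i => (Submodule.mem_inf.1 (hv1 i)).2)
      (fun i => by
        rw [Submodule.mem_orthogonal']
        intro y hy
        exact ((hperp (Ys i) U).1 (hYP i)) (v i) (Submodule.mem_inf.1 (hv1 i)).1 y hy)
      (fun i => by
        rw [Submodule.mem_orthogonal']
        intro y hy
        exact ((hperp (Ys i) W).1 (hYQ i)) (v i) (Submodule.mem_inf.1 (hv1 i)).1 y hy)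
      (fun i j hij =>
        ((hperp (Ys i) (Ys j)).1 (hYY i j hij)) (v i) (Submodule.mem_inf.1 (hv1 i)).1
          (v j) (Submodule.mem_inf.1 (hv1 j)).1)
  obtain ⟨SW, frSW, hSW1, hSW2, hSW3⟩ :=
    span_orthofam (P1 := (φ W).1) (P2 := (φ U).1ᗮ) (P3 := (φ V).1ᗮ) w hw2
      (fun i => (Submodule.mem_inf.1 (hw1 i)).2)
      (fun i => by
        rw [Submodule.mem_orthogonal']
        intro y hy
        exact ((hperp (Zs i) U).1 (hZP i)) (w i) (Submodule.mem_inf.1 (hw1 i)).1 y hy)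
      (fun i => by
        rw [Submodule.mem_orthogonal']
        intro y hy
        exact ((hperp (Zs i) V).1 (hZQ i)) (w i) (Submodule.mem_inf.1 (hw1 i)).1 y hy)
      (fun i j hij =>
        ((hperp (Zs i) (Zs j)).1 (hZZ i j hij)) (w i) (Submodule.mem_inf.1 (hw1 i)).1
          (w j) (Submodule.mem_inf.1 (hw1 j)).1)
  -- nontrivial intersections in the image
  have hUVb : U.1 ⊓ V.1 ≠ ⊥ := by
    intro h; rw [h, finrank_bot] at hl1; omega
  have hUWb : U.1 ⊓ W.1 ≠ ⊥ := by
    intro h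
    have := h2.1
    rw [h, finrank_bot] at this; omega
  have hVWb : V.1 ⊓ W.1 ≠ ⊥ := by
    intro h
    have := h3.1
    rw [h, finrank_bot] at this; omega
  have hUVne : (φ U).1 ⊓ (φ V).1 ≠ ⊥ := fun hbot => hUVb ((hint U V).2 hbot)
  have hUWne : (φ U).1 ⊓ (φ W).1 ≠ ⊥ := fun hbot => hUWb ((hint U W).2 hbot)
  have hVWne : (φ V).1 ⊓ (φ W).1 ≠ ⊥ := fun hbot => hVWb ((hint V W).2 hbot)
  -- the 1-orthogonality relations in the image
  have OOUV : OneOrth (φ U).1 (φ V).1 := oneOrth_target hfrV' hUVne hSV1 hSV2 frSV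
  have OOUW : OneOrth (φ U).1 (φ W).1 := oneOrth_target hfrW' hUWne hSW1 hSW2 frSW
  have OOVW : OneOrth (φ V).1 (φ W).1 := oneOrth_target hfrW' hVWne hSW1 hSW3 frSW
  -- coincidence of the intersection lines
  have K4 := key_lemma (U := (φ V).1) (T := SU) hfrU'
    (by rw [inf_comm]; exact hUVne) hSU1 hSU2 frSU
  have K5 := key_lemma (U := (φ W).1) (T := SU) hfrU'
    (by rw [inf_comm]; exact hUWne) hSU1 hSU3 frSU
  have eVW_U : (φ V).1 ⊓ (φ U).1 = (φ W).1 ⊓ (φ U).1 :=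
    line_eq K4.2 K5.2 (inf_le_left.trans (le_orth_of_le_orth hSU2))
      (inf_le_left.trans (le_orth_of_le_orth hSU3)) K4.1 K5.1 frSU hfrU'
  have K2' := key_lemma (U := (φ U).1) (T := SW) hfrW' hUWne hSW1 hSW2 frSW
  have K3' := key_lemma (U := (φ V).1) (T := SW) hfrW' hVWne hSW1 hSW3 frSW
  have e2' : (φ U).1 ⊓ (φ W).1 = (φ V).1 ⊓ (φ W).1 :=
    line_eq K2'.2 K3'.2 (inf_le_left.trans (le_orth_of_le_orth hSW2))
      (inf_le_left.trans (le_orth_of_le_orth hSW3)) K2'.1 K3'.1 frSW hfrW'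
  have e1' : (φ U).1 ⊓ (φ V).1 = (φ U).1 ⊓ (φ W).1 := by
    calc (φ U).1 ⊓ (φ V).1 = (φ V).1 ⊓ (φ U).1 := inf_comm _ _
    _ = (φ W).1 ⊓ (φ U).1 := eVW_U
    _ = (φ U).1 ⊓ (φ W).1 := inf_comm _ _
  exact ⟨OOUV, OOUW, OOVW, e1', e2'⟩
end

section
/- Let H be a two-dimensional complex Hilbert space and φ : P_1(H) → P_1(H) a map satisfying ma(φ(U), φ(V)) = ma(U, V) for all U, V ∈ P_1(H). Then there exists a unitary or antiunitary operator T : H → H such that φ(W) = T(W) for all W ∈ P_1(H). -/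
/-- The minimal angle between two subspaces of a complex Hilbert space. -/
noncomputable def minAngle {H : Type*} [NormedAddCommGroup H] [InnerProductSpace ℂ H]
    (U V : Submodule ℂ H) : ℝ :=
  sInf {θ : ℝ | ∃ x ∈ U, ∃ y ∈ V, ‖x‖ = 1 ∧ ‖y‖ = 1 ∧
    θ = Real.arccos ‖(inner ℂ x y : ℂ)‖}


open Module Submodule

local notation "⟪" x ", " y "⟫" => @inner ℂ _ _ x y

lemma ray_eq_span' {H : Type*} [NormedAddCommGroup H] [InnerProductSpace ℂ H]
    {U : Submodule ℂ H} (hU : finrank ℂ U = 1) {x : H} (hx : x ∈ U) (hx0 : x ≠ 0) :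
    U = span ℂ {x} := by
  haveI : FiniteDimensional ℂ U := FiniteDimensional.of_finrank_eq_succ hU
  refine (Submodule.eq_of_le_of_finrank_le (span_le.2 (Set.singleton_subset_iff.2 hx)) ?_).symm
  rw [finrank_span_singleton hx0, hU]

lemma ray_exists_unit {H : Type*} [NormedAddCommGroup H] [InnerProductSpace ℂ H]
    {U : Submodule ℂ H} (hU : finrank ℂ U = 1) : ∃ x ∈ U, ‖x‖ = 1 := by
  have hne : U ≠ ⊥ := by
    intro h
    rw [h] at hU
    simp at hU
  obtain ⟨v, hv, hv0⟩ := Submodule.ne_bot_iff _ |>.1 hne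
  refine ⟨(‖v‖⁻¹ : ℂ) • v, U.smul_mem _ hv, ?_⟩
  have : ‖v‖ ≠ 0 := norm_ne_zero_iff.2 hv0
  rw [norm_smul]
  simp [this]

lemma minAngle_ray {H : Type*} [NormedAddCommGroup H] [InnerProductSpace ℂ H]
    {U V : Submodule ℂ H} (hU : finrank ℂ U = 1) (hV : finrank ℂ V = 1)
    {x y : H} (hxU : x ∈ U) (hx : ‖x‖ = 1) (hyV : y ∈ V) (hy : ‖y‖ = 1) :
    minAngle U V = Real.arccos ‖⟪x, y⟫‖ := by
  have hx0 : x ≠ 0 := by intro h; rw [h] at hx; simp at hx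
  have hy0 : y ≠ 0 := by intro h; rw [h] at hy; simp at hy
  have hset : {θ : ℝ | ∃ x' ∈ U, ∃ y' ∈ V, ‖x'‖ = 1 ∧ ‖y'‖ = 1 ∧
      θ = Real.arccos ‖(inner ℂ x' y' : ℂ)‖} = {Real.arccos ‖⟪x, y⟫‖} := by
    apply Set.eq_singleton_iff_unique_mem.2
    refine ⟨⟨x, hxU, y, hyV, hx, hy, rfl⟩, ?_⟩
    rintro θ ⟨x', hx'U, y', hy'V, hx', hy', rfl⟩
    obtain ⟨c, hc⟩ := mem_span_singleton.1 ((ray_eq_span' hU hxU hx0) ▸ hx'U)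
    obtain ⟨d, hd⟩ := mem_span_singleton.1 ((ray_eq_span' hV hyV hy0) ▸ hy'V)
    have hc1 : ‖c‖ = 1 := by
      have := hx'
      rw [← hc, norm_smul, hx, mul_one] at this
      exact this
    have hd1 : ‖d‖ = 1 := by
      have := hy'
      rw [← hd, norm_smul, hy, mul_one] at this
      exact this
    rw [← hc, ← hd, inner_smul_left, inner_smul_right, norm_mul, norm_mul,
      RCLike.norm_conj, hc1, hd1, one_mul, one_mul]
  rw [minAngle, hset, csInf_singleton]

open Complex

lemma inner_expand {H : Type*} [NormedAddCommGroup H] [InnerProductSpace ℂ H]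
    {e₀ e₁ : H} (h00 : ⟪e₀, e₀⟫ = 1) (h11 : ⟪e₁, e₁⟫ = 1) (h01 : ⟪e₀, e₁⟫ = 0)
    (a b c d : ℂ) :
    ⟪a • e₀ + b • e₁, c • e₀ + d • e₁⟫ = starRingEnd ℂ a * c + starRingEnd ℂ b * d := by
  have h10 : ⟪e₁, e₀⟫ = 0 := by
    rw [← inner_conj_symm, h01, map_zero]
  simp only [inner_add_left, inner_add_right, inner_smul_left, inner_smul_right,
    h00, h11, h01, h10, mul_zero, mul_one, add_zero, zero_add, mul_assoc]
  ring

lemma norm_one_of_inner_self {H : Type*} [NormedAddCommGroup H] [InnerProductSpace ℂ H]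
    {x : H} (h : ⟪x, x⟫ = 1) : ‖x‖ = 1 := by
  rw [inner_self_eq_norm_sq_to_K] at h
  have h' : ((‖x‖ ^ 2 : ℝ) : ℂ) = ((1 : ℝ) : ℂ) := by push_cast; exact h
  have : ‖x‖ ^ 2 = 1 := Complex.ofReal_injective h'
  nlinarith [norm_nonneg x]

lemma complex_rigid {r : ℝ} (hr : 0 < r) {b b' : ℂ} (h1 : ‖b'‖ = ‖b‖)
    (h2 : ‖(r : ℂ) + b'‖ = ‖(r : ℂ) + b‖)
    (h3 : ‖(r : ℂ) - I * b'‖ = ‖(r : ℂ) - I * b‖ ∨ ‖(r : ℂ) + I * b'‖ = ‖(r : ℂ) - I * b‖) :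
    b' = b ∨ b' = starRingEnd ℂ b := by
  have e1 : normSq b' = normSq b := by
    rw [← Complex.sq_norm, ← Complex.sq_norm, h1]
  have e2 : normSq ((r : ℂ) + b') = normSq ((r : ℂ) + b) := by
    rw [← Complex.sq_norm, ← Complex.sq_norm, h2]
  simp only [normSq_apply, add_re, add_im, ofReal_re, ofReal_im, zero_add] at e1 e2
  have hre : b'.re = b.re := by nlinarith
  rcases h3 with h3 | h3
  · left
    have e3 : normSq ((r : ℂ) - I * b') = normSq ((r : ℂ) - I * b) := by
      rw [← Complex.sq_norm, ← Complex.sq_norm, h3]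
    simp only [normSq_apply, sub_re, sub_im, mul_re, mul_im, I_re, I_im, ofReal_re, ofReal_im,
      zero_mul, one_mul, zero_sub, sub_zero, zero_add, neg_neg] at e3
    have him : b'.im = b.im := by nlinarith
    exact Complex.ext hre him
  · right
    have e3 : normSq ((r : ℂ) + I * b') = normSq ((r : ℂ) - I * b) := by
      rw [← Complex.sq_norm, ← Complex.sq_norm, h3]
    simp only [normSq_apply, sub_re, sub_im, add_re, add_im, mul_re, mul_im, I_re, I_im,
      ofReal_re, ofReal_im, zero_mul, one_mul, zero_sub, sub_zero, zero_add, neg_neg] at e3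
    have him : b'.im = -b.im := by nlinarith
    refine Complex.ext ?_ ?_ <;> simp [Complex.conj_re, Complex.conj_im, hre, him]


/-- Build an orthonormal basis of a 2-dimensional space from an orthonormal pair. -/
noncomputable def onbOfPair {H : Type*} [NormedAddCommGroup H] [InnerProductSpace ℂ H]
    (hdim : finrank ℂ H = 2) (f₀ f₁ : H) (h00 : ⟪f₀, f₀⟫ = 1) (h11 : ⟪f₁, f₁⟫ = 1)
    (h01 : ⟪f₀, f₁⟫ = 0) : OrthonormalBasis (Fin 2) ℂ H := by
  have h10 : ⟪f₁, f₀⟫ = 0 := by rw [← inner_conj_symm, h01, map_zero]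
  have horth : Orthonormal ℂ ![f₀, f₁] := by
    rw [orthonormal_iff_ite]
    intro i j
    fin_cases i <;> fin_cases j <;>
      simp [h00, h11, h01, h10, norm_one_of_inner_self h00, norm_one_of_inner_self h11]
  exact OrthonormalBasis.mk horth
    (ge_of_eq (horth.linearIndependent.span_eq_top_of_card_eq_finrank (by simp [hdim])))

lemma onbOfPair_zero {H : Type*} [NormedAddCommGroup H] [InnerProductSpace ℂ H]
    (hdim : finrank ℂ H = 2) (f₀ f₁ : H) (h00 : ⟪f₀, f₀⟫ = 1) (h11 : ⟪f₁, f₁⟫ = 1)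
    (h01 : ⟪f₀, f₁⟫ = 0) : onbOfPair hdim f₀ f₁ h00 h11 h01 0 = f₀ ∧
      onbOfPair hdim f₀ f₁ h00 h11 h01 1 = f₁ := by
  constructor <;> simp [onbOfPair, OrthonormalBasis.coe_mk]

/-- The unitary map sending one orthonormal basis to another. -/
lemma exists_unitary_map {H : Type*} [NormedAddCommGroup H] [InnerProductSpace ℂ H]
    (B C : OrthonormalBasis (Fin 2) ℂ H) :
    ∃ T : H ≃ₗᵢ[ℂ] H, ∀ a b : ℂ, T (a • B 0 + b • B 1) = a • C 0 + b • C 1 := by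
  refine ⟨B.repr.trans C.repr.symm, fun a b => ?_⟩
  have h0 : (B.repr.trans C.repr.symm) (B 0) = C 0 := by
    simp [LinearIsometryEquiv.trans_apply, OrthonormalBasis.repr_self,
      OrthonormalBasis.repr_symm_single]
  have h1 : (B.repr.trans C.repr.symm) (B 1) = C 1 := by
    simp [LinearIsometryEquiv.trans_apply, OrthonormalBasis.repr_self,
      OrthonormalBasis.repr_symm_single]
  rw [map_add, LinearIsometryEquiv.map_smul, LinearIsometryEquiv.map_smul, h0, h1]

/-- The antiunitary map conjugating coordinates between two orthonormal bases. -/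
lemma exists_antiunitary_map {H : Type*} [NormedAddCommGroup H] [InnerProductSpace ℂ H]
    (B C : OrthonormalBasis (Fin 2) ℂ H) :
    ∃ T : H ≃ₛₗᵢ[starRingEnd ℂ] H, ∀ a b : ℂ,
      T (a • B 0 + b • B 1) = (starRingEnd ℂ a) • C 0 + (starRingEnd ℂ b) • C 1 := by
  have hBo := orthonormal_iff_ite.1 B.orthonormal
  have hCo := orthonormal_iff_ite.1 C.orthonormal
  have hBrep : ∀ x : H, ⟪B 0, x⟫ • B 0 + ⟪B 1, x⟫ • B 1 = x := by
    intro x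
    have := B.sum_repr' x
    rwa [Fin.sum_univ_two] at this
  have hCrep : ∀ x : H, ⟪C 0, x⟫ • C 0 + ⟪C 1, x⟫ • C 1 = x := by
    intro x
    have := C.sum_repr' x
    rwa [Fin.sum_univ_two] at this
  have hinnC : ∀ (a b : ℂ) (i : Fin 2), ⟪C i, a • C 0 + b • C 1⟫ =
      a * (if i = 0 then 1 else 0) + b * (if i = 1 then 1 else 0) := by
    intro a b i
    rw [inner_add_right, inner_smul_right, inner_smul_right, hCo i 0, hCo i 1]
  have hinnB : ∀ (a b : ℂ) (i : Fin 2), ⟪B i, a • B 0 + b • B 1⟫ =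
      a * (if i = 0 then 1 else 0) + b * (if i = 1 then 1 else 0) := by
    intro a b i
    rw [inner_add_right, inner_smul_right, inner_smul_right, hBo i 0, hBo i 1]
  refine ⟨⟨{ toFun := fun x => (starRingEnd ℂ ⟪B 0, x⟫) • C 0 + (starRingEnd ℂ ⟪B 1, x⟫) • C 1
             invFun := fun z => (starRingEnd ℂ ⟪C 0, z⟫) • B 0 + (starRingEnd ℂ ⟪C 1, z⟫) • B 1
             map_add' := by
               intro x y
               simp only [inner_add_right, map_add, add_smul]
               abel
             map_smul' := by
               intro c x
               simp only [inner_smul_right, map_mul, RingHom.id_apply, smul_smul, smul_add]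
             left_inv := by
               intro x
               simp only [hinnC]
               simpa using hBrep x
             right_inv := by
               intro z
               simp only [hinnB]
               simpa using hCrep z }, ?_⟩, ?_⟩
  · -- norm_map
    intro x
    simp only [LinearEquiv.coe_mk, AddHom.coe_mk]
    have hx := hBrep x
    set a := ⟪B 0, x⟫ with ha
    set b := ⟪B 1, x⟫ with hb
    have hxx : ⟪x, x⟫ = starRingEnd ℂ a * a + starRingEnd ℂ b * b := by
      conv_lhs => rw [← hx]
      rw [inner_expand (hBo 0 0 |>.trans (if_pos rfl)) (hBo 1 1 |>.trans (if_pos rfl))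
        (hBo 0 1 |>.trans (if_neg (by decide)))]
    have hTT : ⟪(starRingEnd ℂ a) • C 0 + (starRingEnd ℂ b) • C 1,
        (starRingEnd ℂ a) • C 0 + (starRingEnd ℂ b) • C 1⟫
        = starRingEnd ℂ a * a + starRingEnd ℂ b * b := by
      rw [inner_expand (hCo 0 0 |>.trans (if_pos rfl)) (hCo 1 1 |>.trans (if_pos rfl))
        (hCo 0 1 |>.trans (if_neg (by decide)))]
      simp only [Complex.conj_conj]
      ring
    rw [@norm_eq_sqrt_re_inner ℂ, @norm_eq_sqrt_re_inner ℂ]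
    congr 1
    rw [hxx, ← hTT]
    rfl
  · intro a b
    simp only [LinearIsometryEquiv.coe_mk, LinearEquiv.coe_mk, AddHom.coe_mk, hinnB]
    simp [-inner_conj_symm, hinnB, if_neg (by decide : (0 : Fin 2) ≠ 1), if_neg (by decide : (1 : Fin 2) ≠ 0)]

lemma aux_im {s : ℝ} (hs : 0 < s) (hss : s * s = 1/2) {u : ℂ} (h1 : ‖u‖ = s)
    (h2 : ‖(((1:ℝ)/2 : ℝ) : ℂ) + (s : ℂ) * u‖ = s) : u = (s : ℂ) * I ∨ u = -((s : ℂ) * I) := by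
  have e1 : normSq u = s * s := by
    rw [← Complex.sq_norm, h1, sq]
  have e2 : normSq ((((1:ℝ)/2 : ℝ) : ℂ) + (s : ℂ) * u) = s * s := by
    rw [← Complex.sq_norm, h2, sq]
  simp only [normSq_apply, add_re, add_im, mul_re, mul_im, ofReal_re, ofReal_im,
    zero_mul, one_mul, zero_add, sub_zero, zero_sub, neg_neg, Complex.div_re, Complex.div_im,
    Complex.one_re, Complex.one_im] at e1 e2
  have hre0 : u.re = 0 := by nlinarith
  have him : (u.im - s) * (u.im + s) = 0 := by nlinarith
  rcases mul_eq_zero.1 him with h | h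
  · left
    refine Complex.ext ?_ ?_ <;>
      simp [hre0, mul_re, mul_im, ofReal_re, ofReal_im, I_re, I_im]
    linarith
  · right
    refine Complex.ext ?_ ?_ <;>
      simp [hre0, mul_re, mul_im, ofReal_re, ofReal_im, I_re, I_im]
    linarith

lemma rigidA {r : ℝ} (hr : 0 < r) {b b' : ℂ} (h1 : ‖b'‖ = ‖b‖)
    (h2 : ‖(r : ℂ) + b'‖ = ‖(r : ℂ) + b‖)
    (h3 : ‖(r : ℂ) - I * b'‖ = ‖(r : ℂ) - I * b‖) : b' = b := by
  rcases complex_rigid hr h1 h2 (Or.inl h3) with h | h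
  · exact h
  · -- also need im equality directly; rederive
    have e1 : normSq b' = normSq b := by
      rw [← Complex.sq_norm, ← Complex.sq_norm, h1]
    have e3 : normSq ((r : ℂ) - I * b') = normSq ((r : ℂ) - I * b) := by
      rw [← Complex.sq_norm, ← Complex.sq_norm, h3]
    simp only [normSq_apply, sub_re, sub_im, mul_re, mul_im, I_re, I_im, ofReal_re, ofReal_im,
      zero_mul, one_mul, zero_sub, sub_zero, zero_add, neg_neg] at e1 e3
    have him : b'.im = b.im := by nlinarith
    have hre : b'.re = b.re := by
      have := congrArg Complex.re h
      simpa using this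
    exact Complex.ext hre him

lemma rigidB {r : ℝ} (hr : 0 < r) {b b' : ℂ} (h1 : ‖b'‖ = ‖b‖)
    (h2 : ‖(r : ℂ) + b'‖ = ‖(r : ℂ) + b‖)
    (h3 : ‖(r : ℂ) + I * b'‖ = ‖(r : ℂ) - I * b‖) : b' = starRingEnd ℂ b := by
  have e1 : normSq b' = normSq b := by
    rw [← Complex.sq_norm, ← Complex.sq_norm, h1]
  have e2 : normSq ((r : ℂ) + b') = normSq ((r : ℂ) + b) := by
    rw [← Complex.sq_norm, ← Complex.sq_norm, h2]
  have e3 : normSq ((r : ℂ) + I * b') = normSq ((r : ℂ) - I * b) := by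
    rw [← Complex.sq_norm, ← Complex.sq_norm, h3]
  simp only [normSq_apply, add_re, add_im, sub_re, sub_im, mul_re, mul_im, I_re, I_im,
    ofReal_re, ofReal_im, zero_mul, one_mul, zero_sub, sub_zero, zero_add, neg_neg] at e1 e2 e3
  have hre : b'.re = b.re := by nlinarith
  have him : b'.im = -b.im := by nlinarith
  refine Complex.ext ?_ ?_ <;> simp [Complex.conj_re, Complex.conj_im, hre, him]

lemma unit_ne_zero {H : Type*} [NormedAddCommGroup H] {x : H} (hx : ‖x‖ = 1) : x ≠ 0 := by
  intro h
  rw [h, norm_zero] at hx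
  norm_num at hx

/-- If `dim H = 2` and `φ : P_1(H) → P_1(H)` preserves the minimal angle, then `φ` is
induced by a unitary or antiunitary operator. -/
theorem minAngle_preserver_dim_two
    {H : Type*} [NormedAddCommGroup H] [InnerProductSpace ℂ H] [CompleteSpace H]
    (hdim : Module.finrank ℂ H = 2)
    (φ : {U : Submodule ℂ H // Module.finrank ℂ U = 1} →
         {U : Submodule ℂ H // Module.finrank ℂ U = 1})
    (hφ : ∀ U V, minAngle (φ U).1 (φ V).1 = minAngle U.1 V.1) :
    (∃ T : H ≃ₗᵢ[ℂ] H, ∀ W, (φ W).1 = W.1.map T.toLinearEquiv.toLinearMap) ∨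
    (∃ T : H ≃ₛₗᵢ[starRingEnd ℂ] H, ∀ W, (φ W).1 = W.1.map T.toLinearEquiv.toLinearMap) := by
  haveI : FiniteDimensional ℂ H := FiniteDimensional.of_finrank_eq_succ hdim
  -- the key invariant: φ preserves transition probabilities
  have key : ∀ (U V : {U : Submodule ℂ H // finrank ℂ U = 1}) (x y x' y' : H),
      x ∈ U.1 → ‖x‖ = 1 → y ∈ V.1 → ‖y‖ = 1 → x' ∈ (φ U).1 → ‖x'‖ = 1 →
      y' ∈ (φ V).1 → ‖y'‖ = 1 → ‖⟪x', y'⟫‖ = ‖⟪x, y⟫‖ := by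
    intro U V x y x' y' hxU hx hyV hy hx'U hx' hy'V hy'
    have h1 := minAngle_ray U.2 V.2 hxU hx hyV hy
    have h2 := minAngle_ray (φ U).2 (φ V).2 hx'U hx' hy'V hy'
    have h3 := hφ U V
    rw [h1, h2] at h3
    have c1 : ‖⟪x', y'⟫‖ ≤ 1 := by
      have := norm_inner_le_norm (𝕜 := ℂ) x' y'
      rwa [hx', hy', mul_one] at this
    have c2 : ‖⟪x, y⟫‖ ≤ 1 := by
      have := norm_inner_le_norm (𝕜 := ℂ) x y
      rwa [hx, hy, mul_one] at this
    calc ‖⟪x', y'⟫‖ = Real.cos (Real.arccos ‖⟪x', y'⟫‖) :=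
          (Real.cos_arccos (le_trans (by norm_num) (norm_nonneg _)) c1).symm
      _ = Real.cos (Real.arccos ‖⟪x, y⟫‖) := by rw [h3]
      _ = ‖⟪x, y⟫‖ := Real.cos_arccos (le_trans (by norm_num) (norm_nonneg _)) c2
  -- orthonormal basis
  set B := (stdOrthonormalBasis ℂ H).reindex (finCongr hdim) with hBdef
  set e₀ := B 0 with he₀def
  set e₁ := B 1 with he₁def
  have hBo := orthonormal_iff_ite.1 B.orthonormal
  have he00 : ⟪e₀, e₀⟫ = 1 := by exact (hBo 0 0).trans (if_pos rfl)
  have he11 : ⟪e₁, e₁⟫ = 1 := by exact (hBo 1 1).trans (if_pos rfl)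
  have he01 : ⟪e₀, e₁⟫ = 0 := by exact (hBo 0 1).trans (if_neg (by decide))
  have he0n : ‖e₀‖ = 1 := norm_one_of_inner_self he00
  have he1n : ‖e₁‖ = 1 := norm_one_of_inner_self he11
  have hBrep : ∀ x : H, ⟪e₀, x⟫ • e₀ + ⟪e₁, x⟫ • e₁ = x := by
    intro x
    have := B.sum_repr' x
    rwa [Fin.sum_univ_two] at this
  -- basic rays
  let U₀ : {U : Submodule ℂ H // finrank ℂ U = 1} :=
    ⟨span ℂ {e₀}, finrank_span_singleton (unit_ne_zero he0n)⟩
  let U₁ : {U : Submodule ℂ H // finrank ℂ U = 1} :=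
    ⟨span ℂ {e₁}, finrank_span_singleton (unit_ne_zero he1n)⟩
  have he₀U₀ : e₀ ∈ U₀.1 := mem_span_singleton_self e₀
  have he₁U₁ : e₁ ∈ U₁.1 := mem_span_singleton_self e₁
  obtain ⟨g₀, hg₀m, hg₀n⟩ := ray_exists_unit (φ U₀).2
  obtain ⟨g₁, hg₁m, hg₁n⟩ := ray_exists_unit (φ U₁).2
  have hg00 : ⟪g₀, g₀⟫ = 1 := by
    rw [inner_self_eq_norm_sq_to_K, hg₀n]
    norm_num
  have hg11 : ⟪g₁, g₁⟫ = 1 := by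
    rw [inner_self_eq_norm_sq_to_K, hg₁n]
    norm_num
  have hg01 : ⟪g₀, g₁⟫ = 0 := by
    have := key U₀ U₁ e₀ e₁ g₀ g₁ he₀U₀ he0n he₁U₁ he1n hg₀m hg₀n hg₁m hg₁n
    rw [he01, norm_zero, norm_eq_zero] at this
    exact this
  -- the constant s = 1/√2
  set s : ℝ := (Real.sqrt 2)⁻¹ with hsdef
  have hs0 : 0 < s := by positivity
  have hssR : s * s = 1/2 := by
    rw [hsdef, ← mul_inv, Real.mul_self_sqrt (by norm_num)]
    norm_num
  have hss : (s : ℂ) * (s : ℂ) = 1/2 := by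
    rw [← ofReal_mul, hssR]
    norm_num
  have hcs : starRingEnd ℂ (s : ℂ) = (s : ℂ) := Complex.conj_ofReal s
  have hsne : (s : ℂ) ≠ 0 := by
    simp only [ne_eq, ofReal_eq_zero]
    exact ne_of_gt hs0
  have hsnorm : ‖(s : ℂ)‖ = s := by
    rw [Complex.norm_real, Real.norm_eq_abs, abs_of_pos hs0]
  -- the vector v = s(e₀ + e₁)
  set v : H := (s : ℂ) • e₀ + (s : ℂ) • e₁ with hvdef
  have hvinner : ⟪v, v⟫ = 1 := by
    rw [hvdef, inner_expand he00 he11 he01, hcs]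
    linear_combination 2 * hss
  have hvn : ‖v‖ = 1 := norm_one_of_inner_self hvinner
  let V : {U : Submodule ℂ H // finrank ℂ U = 1} :=
    ⟨span ℂ {v}, finrank_span_singleton (unit_ne_zero hvn)⟩
  have hvV : v ∈ V.1 := mem_span_singleton_self v
  obtain ⟨w₀, hw₀m, hw₀n⟩ := ray_exists_unit (φ V).2
  have he₀v : ⟪e₀, v⟫ = (s : ℂ) := by
    rw [hvdef, inner_add_right, inner_smul_right, inner_smul_right, he00, he01]
    ring
  have he₁v : ⟪e₁, v⟫ = (s : ℂ) := by
    have he10 : ⟪e₁, e₀⟫ = 0 := by rw [← inner_conj_symm, he01, map_zero]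
    rw [hvdef, inner_add_right, inner_smul_right, inner_smul_right, he11, he10]
    ring
  -- normalize the phase of w₀
  have hpn : ‖⟪g₀, w₀⟫‖ = s := by
    have := key U₀ V e₀ v g₀ w₀ he₀U₀ he0n hvV hvn hg₀m hg₀n hw₀m hw₀n
    rwa [he₀v, hsnorm] at this
  have hpne : ⟪g₀, w₀⟫ ≠ 0 := by
    intro h
    rw [h, norm_zero] at hpn
    exact absurd hpn.symm (ne_of_gt hs0)
  set w : H := ((s : ℂ) / ⟪g₀, w₀⟫) • w₀ with hwdef
  have hwm : w ∈ (φ V).1 := Submodule.smul_mem _ _ hw₀m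
  have hwn : ‖w‖ = 1 := by
    rw [hwdef, norm_smul, norm_div, hsnorm, hpn, hw₀n, mul_one, div_self (ne_of_gt hs0)]
  have hg₀w : ⟪g₀, w⟫ = (s : ℂ) := by
    rw [hwdef, inner_smul_right, div_mul_cancel₀ _ hpne]
  set q : ℂ := ⟪g₁, w⟫ with hqdef
  have hqn : ‖q‖ = s := by
    have := key U₁ V e₁ v g₁ w he₁U₁ he1n hvV hvn hg₁m hg₁n hwm hwn
    rwa [he₁v, hsnorm] at this
  have hqne : q ≠ 0 := by
    intro h
    rw [h, norm_zero] at hqn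
    exact absurd hqn.symm (ne_of_gt hs0)
  -- the corrected second basis vector f₁
  set μ : ℂ := q / (s : ℂ) with hμdef
  have hμn : ‖μ‖ = 1 := by
    rw [hμdef, norm_div, hqn, hsnorm, div_self (ne_of_gt hs0)]
  have hμne : μ ≠ 0 := by
    intro h
    rw [h, norm_zero] at hμn
    norm_num at hμn
  set f₁ : H := μ • g₁ with hf₁def
  have hμconj : starRingEnd ℂ μ * μ = 1 := by
    have : starRingEnd ℂ μ * μ = (normSq μ : ℂ) := by
      rw [mul_comm, Complex.mul_conj]
    rw [this]
    have : normSq μ = 1 := by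
      rw [← Complex.sq_norm, hμn, one_pow]
    rw [this, ofReal_one]
  have hf₁m : f₁ ∈ (φ U₁).1 := Submodule.smul_mem _ _ hg₁m
  have hf₁n : ‖f₁‖ = 1 := by
    rw [hf₁def, norm_smul, hμn, hg₁n, mul_one]
  have hg0f1 : ⟪g₀, f₁⟫ = 0 := by
    rw [hf₁def, inner_smul_right, hg01, mul_zero]
  have hf11 : ⟪f₁, f₁⟫ = 1 := by
    rw [hf₁def, inner_smul_left, inner_smul_right, hg11, mul_one, hμconj]
  -- the orthonormal basis C = (g₀, f₁)
  set C := onbOfPair hdim g₀ f₁ hg00 hf11 hg0f1 with hCdef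
  obtain ⟨hC0, hC1⟩ := onbOfPair_zero hdim g₀ f₁ hg00 hf11 hg0f1
  have hCrep : ∀ z : H, ⟪g₀, z⟫ • g₀ + ⟪f₁, z⟫ • f₁ = z := by
    intro z
    have := C.sum_repr' z
    rwa [Fin.sum_univ_two, hC0, hC1] at this
  have hf₁w : ⟪f₁, w⟫ = (s : ℂ) := by
    have h1 : ⟪f₁, w⟫ = starRingEnd ℂ μ * q := by rw [hf₁def, inner_smul_left, ← hqdef]
    have h2 : starRingEnd ℂ q * q = (s : ℂ) * (s : ℂ) := by
      have hnq : normSq q = s * s := by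
        rw [← Complex.sq_norm, hqn, sq]
      rw [mul_comm, Complex.mul_conj, hnq, ofReal_mul]
    rw [h1, hμdef, map_div₀, hcs, div_mul_eq_mul_div, h2, mul_div_assoc,
      div_self hsne, mul_one]
  have hwrep : w = (s : ℂ) • g₀ + (s : ℂ) • f₁ := by
    conv_lhs => rw [← hCrep w]
    rw [hg₀w, hf₁w]
  -- the vector v' = s(e₀ + i e₁)
  set v' : H := (s : ℂ) • e₀ + ((s : ℂ) * I) • e₁ with hv'def
  have hv'inner : ⟪v', v'⟫ = 1 := by
    rw [hv'def, inner_expand he00 he11 he01, hcs, map_mul, hcs, Complex.conj_I]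
    have hI : I * I = -1 := I_mul_I
    linear_combination 2 * hss - (s:ℂ)*(s:ℂ) * hI
  have hv'n : ‖v'‖ = 1 := norm_one_of_inner_self hv'inner
  let V' : {U : Submodule ℂ H // finrank ℂ U = 1} :=
    ⟨span ℂ {v'}, finrank_span_singleton (unit_ne_zero hv'n)⟩
  have hv'V' : v' ∈ V'.1 := mem_span_singleton_self v'
  obtain ⟨w₀', hw₀'m, hw₀'n⟩ := ray_exists_unit (φ V').2
  have he₀v' : ⟪e₀, v'⟫ = (s : ℂ) := by
    rw [hv'def, inner_add_right, inner_smul_right, inner_smul_right, he00, he01]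
    ring
  have he₁v' : ⟪e₁, v'⟫ = (s : ℂ) * I := by
    have he10 : ⟪e₁, e₀⟫ = 0 := by rw [← inner_conj_symm, he01, map_zero]
    rw [hv'def, inner_add_right, inner_smul_right, inner_smul_right, he11, he10]
    ring
  have hp'n : ‖⟪g₀, w₀'⟫‖ = s := by
    have := key U₀ V' e₀ v' g₀ w₀' he₀U₀ he0n hv'V' hv'n hg₀m hg₀n hw₀'m hw₀'n
    rwa [he₀v', hsnorm] at this
  have hp'ne : ⟪g₀, w₀'⟫ ≠ 0 := by
    intro h
    rw [h, norm_zero] at hp'n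
    exact absurd hp'n.symm (ne_of_gt hs0)
  set w' : H := ((s : ℂ) / ⟪g₀, w₀'⟫) • w₀' with hw'def
  have hw'm : w' ∈ (φ V').1 := Submodule.smul_mem _ _ hw₀'m
  have hw'n : ‖w'‖ = 1 := by
    rw [hw'def, norm_smul, norm_div, hsnorm, hp'n, hw₀'n, mul_one, div_self (ne_of_gt hs0)]
  have hg₀w' : ⟪g₀, w'⟫ = (s : ℂ) := by
    rw [hw'def, inner_smul_right, div_mul_cancel₀ _ hp'ne]
  set t : ℂ := ⟪f₁, w'⟫ with htdef
  have htn : ‖t‖ = s := by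
    have := key U₁ V' e₁ v' f₁ w' he₁U₁ he1n hv'V' hv'n hf₁m hf₁n hw'm hw'n
    rw [he₁v', norm_mul, hsnorm, Complex.norm_I, mul_one] at this
    exact this
  have hw'rep : w' = (s : ℂ) • g₀ + t • f₁ := by
    conv_lhs => rw [← hCrep w']
    rw [hg₀w', htdef]
  -- the angle between V and V' pins down t = ± s i
  have hvv' : ⟪v, v'⟫ = (1/2 : ℂ) + (1/2 : ℂ) * I := by
    rw [hvdef, hv'def, inner_expand he00 he11 he01, hcs]
    linear_combination (1 + I) * hss
  have hww' : ⟪w, w'⟫ = (1/2 : ℂ) + (s : ℂ) * t := by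
    rw [hwrep, hw'rep, inner_expand hg00 hf11 hg0f1, hcs]
    linear_combination hss
  have htval : t = (s : ℂ) * I ∨ t = -((s : ℂ) * I) := by
    have hk := key V V' v v' w w' hvV hvn hv'V' hv'n hwm hwn hw'm hw'n
    rw [hvv', hww'] at hk
    have hnv : ‖(1/2 : ℂ) + (1/2 : ℂ) * I‖ = s := by
      rw [show ((1:ℂ)/2 + (1/2) * I) = Complex.mk (1/2) (1/2) by
        apply Complex.ext <;> simp]
      rw [Complex.norm_def, normSq_mk]
      rw [hsdef, ← Real.sqrt_inv]
      norm_num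
    rw [hnv] at hk
    rw [show ((1:ℂ)/2) = (((1:ℝ)/2 : ℝ) : ℂ) by norm_num] at hk
    exact aux_im hs0 hssR htn hk
  -- coordinates of a general ray and its image
  have main : ∀ W, W = U₁ ∨ ∃ (r : ℝ) (b b' : ℂ) (x y : H), 0 < r ∧
      x = ((r : ℝ) : ℂ) • e₀ + b • e₁ ∧ y = ((r : ℝ) : ℂ) • g₀ + b' • f₁ ∧
      W.1 = span ℂ {x} ∧ (φ W).1 = span ℂ {y} ∧
      ‖b'‖ = ‖b‖ ∧ ‖((r : ℝ) : ℂ) + b'‖ = ‖((r : ℝ) : ℂ) + b‖ ∧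
      ‖(s : ℂ) * (r : ℂ) + starRingEnd ℂ t * b'‖ = s * ‖((r : ℝ) : ℂ) - I * b‖ := by
    intro W
    obtain ⟨x₀, hx₀m, hx₀n⟩ := ray_exists_unit W.2
    have hWspan : W.1 = span ℂ {x₀} := ray_eq_span' W.2 hx₀m (unit_ne_zero hx₀n)
    by_cases ha₀ : ⟪e₀, x₀⟫ = 0
    · left
      have hb₀ : ⟪e₁, x₀⟫ ≠ 0 := by
        intro hb
        have := hBrep x₀
        rw [ha₀, hb, zero_smul, zero_smul, add_zero] at this
        exact unit_ne_zero hx₀n this.symm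
      have hx₀e : x₀ = ⟪e₁, x₀⟫ • e₁ := by
        conv_lhs => rw [← hBrep x₀]
        rw [ha₀, zero_smul, zero_add]
      apply Subtype.ext
      rw [hWspan, hx₀e, Submodule.span_singleton_smul_eq (isUnit_iff_ne_zero.2 hb₀)]
    · right
      set a₀ := ⟪e₀, x₀⟫ with ha₀def
      set r : ℝ := ‖a₀‖ with hrdef
      have hr0 : 0 < r := by
        rw [hrdef]
        exact norm_pos_iff.2 ha₀
      set x : H := (((r : ℝ) : ℂ) / a₀) • x₀ with hxdef
      have hxm : x ∈ W.1 := Submodule.smul_mem _ _ hx₀m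
      have hrnorm : ‖((r : ℝ) : ℂ)‖ = r := by
        rw [Complex.norm_real, Real.norm_eq_abs, abs_of_pos hr0]
      have hxn : ‖x‖ = 1 := by
        rw [hxdef, norm_smul, norm_div, hrnorm, ← hrdef, hx₀n, mul_one,
          div_self (ne_of_gt hr0)]
      have he₀x : ⟪e₀, x⟫ = ((r : ℝ) : ℂ) := by
        rw [hxdef, inner_smul_right, ← ha₀def, div_mul_cancel₀ _ ha₀]
      set b : ℂ := ⟪e₁, x⟫ with hbdef
      have hxrep : x = ((r : ℝ) : ℂ) • e₀ + b • e₁ := by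
        conv_lhs => rw [← hBrep x]
        rw [he₀x, hbdef]
      -- the image vector
      obtain ⟨y₀, hy₀m, hy₀n⟩ := ray_exists_unit (φ W).2
      have hp₀n : ‖⟪g₀, y₀⟫‖ = r := by
        have := key U₀ W e₀ x g₀ y₀ he₀U₀ he0n hxm hxn hg₀m hg₀n hy₀m hy₀n
        rwa [he₀x, hrnorm] at this
      have hp₀ne : ⟪g₀, y₀⟫ ≠ 0 := by
        intro h
        rw [h, norm_zero] at hp₀n
        exact absurd hp₀n.symm (ne_of_gt hr0)
      set y : H := (((r : ℝ) : ℂ) / ⟪g₀, y₀⟫) • y₀ with hydef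
      have hym : y ∈ (φ W).1 := Submodule.smul_mem _ _ hy₀m
      have hyn : ‖y‖ = 1 := by
        rw [hydef, norm_smul, norm_div, hrnorm, hp₀n, hy₀n, mul_one,
          div_self (ne_of_gt hr0)]
      have hg₀y : ⟪g₀, y⟫ = ((r : ℝ) : ℂ) := by
        rw [hydef, inner_smul_right, div_mul_cancel₀ _ hp₀ne]
      set b' : ℂ := ⟪f₁, y⟫ with hb'def
      have hyrep : y = ((r : ℝ) : ℂ) • g₀ + b' • f₁ := by
        conv_lhs => rw [← hCrep y]
        rw [hg₀y, hb'def]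
      have hb'n : ‖b'‖ = ‖b‖ := by
        have := key U₁ W e₁ x f₁ y he₁U₁ he1n hxm hxn hf₁m hf₁n hym hyn
        rwa [← hbdef, ← hb'def] at this
      -- constraint from V
      have hcon1 : ‖((r : ℝ) : ℂ) + b'‖ = ‖((r : ℝ) : ℂ) + b‖ := by
        have hk := key V W v x w y hvV hvn hxm hxn hwm hwn hym hyn
        have hvx : ⟪v, x⟫ = (s : ℂ) * (((r : ℝ) : ℂ) + b) := by
          rw [hvdef, hxrep, inner_expand he00 he11 he01, hcs]
          ring
        have hwy : ⟪w, y⟫ = (s : ℂ) * (((r : ℝ) : ℂ) + b') := by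
          rw [hwrep, hyrep, inner_expand hg00 hf11 hg0f1, hcs]
          ring
        rw [hvx, hwy, norm_mul, norm_mul, hsnorm] at hk
        exact mul_left_cancel₀ (ne_of_gt hs0) hk
      -- constraint from V'
      have hcon2 : ‖(s : ℂ) * (r : ℂ) + starRingEnd ℂ t * b'‖
          = s * ‖((r : ℝ) : ℂ) - I * b‖ := by
        have hk := key V' W v' x w' y hv'V' hv'n hxm hxn hw'm hw'n hym hyn
        have hv'x : ⟪v', x⟫ = (s : ℂ) * (((r : ℝ) : ℂ) - I * b) := by
          rw [hv'def, hxrep, inner_expand he00 he11 he01, hcs, map_mul, hcs, Complex.conj_I]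
          ring
        have hw'y : ⟪w', y⟫ = (s : ℂ) * (r : ℂ) + starRingEnd ℂ t * b' := by
          rw [hw'rep, hyrep, inner_expand hg00 hf11 hg0f1, hcs]
        rw [hv'x, hw'y, norm_mul, hsnorm] at hk
        exact hk
      exact ⟨r, b, b', x, y, hr0, hxrep, hyrep,
        ray_eq_span' W.2 hxm (unit_ne_zero hxn),
        ray_eq_span' (φ W).2 hym (unit_ne_zero hyn), hb'n, hcon1, hcon2⟩
  -- span of f₁ equals span of g₁
  have hφU₁ : (φ U₁).1 = span ℂ {f₁} := ray_eq_span' (φ U₁).2 hf₁m (unit_ne_zero hf₁n)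
  rcases htval with ht | ht
  · -- unitary case
    left
    obtain ⟨T, hT⟩ := exists_unitary_map B C
    refine ⟨T, fun W => ?_⟩
    have hTe : ∀ a b : ℂ, T (a • e₀ + b • e₁) = a • g₀ + b • f₁ := by
      intro a b
      rw [← he₀def, ← he₁def] at hT
      rw [hT a b, hC0, hC1]
    rcases main W with rfl | ⟨r, b, b', x, y, hr0, hxrep, hyrep, hWspan, hφWspan,
        hb'n, hcon1, hcon2⟩
    · -- W = U₁
      have hTe₁ : T e₁ = f₁ := by
        have := hTe 0 1
        simpa using this
      show (φ U₁).1 = Submodule.map _ (span ℂ {e₁})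
      rw [Submodule.map_span, Set.image_singleton, hφU₁]
      congr 1
      rw [show T.toLinearEquiv.toLinearMap e₁ = T e₁ from rfl, hTe₁]
    · -- general ray
      have hb'b : b' = b := by
        refine rigidA hr0 hb'n hcon1 ?_
        have : ‖(s : ℂ) * (r : ℂ) + starRingEnd ℂ t * b'‖
            = s * ‖((r : ℝ) : ℂ) - I * b'‖ := by
          rw [ht, map_mul, hcs, Complex.conj_I]
          rw [show (s : ℂ) * (r : ℂ) + (s : ℂ) * (-I) * b'
              = (s : ℂ) * (((r : ℝ) : ℂ) - I * b') by ring]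
          rw [norm_mul, hsnorm]
        rw [this] at hcon2
        exact mul_left_cancel₀ (ne_of_gt hs0) hcon2
      have hTx : T x = y := by
        rw [hxrep, hTe, hyrep, hb'b]
      rw [hφWspan, hWspan, Submodule.map_span, Set.image_singleton]
      congr 1
      rw [show T.toLinearEquiv.toLinearMap x = T x from rfl, hTx]
  · -- antiunitary case
    right
    obtain ⟨T, hT⟩ := exists_antiunitary_map B C
    refine ⟨T, fun W => ?_⟩
    have hTe : ∀ a b : ℂ, T (a • e₀ + b • e₁)
        = starRingEnd ℂ a • g₀ + starRingEnd ℂ b • f₁ := by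
      intro a b
      rw [← he₀def, ← he₁def] at hT
      rw [hT a b, hC0, hC1]
    rcases main W with rfl | ⟨r, b, b', x, y, hr0, hxrep, hyrep, hWspan, hφWspan,
        hb'n, hcon1, hcon2⟩
    · have hTe₁ : T e₁ = f₁ := by
        have := hTe 0 1
        simpa using this
      show (φ U₁).1 = Submodule.map _ (span ℂ {e₁})
      rw [Submodule.map_span, Set.image_singleton, hφU₁]
      congr 1
      rw [show T.toLinearEquiv.toLinearMap e₁ = T e₁ from rfl, hTe₁]
    · have hb'b : b' = starRingEnd ℂ b := by
        refine rigidB hr0 hb'n hcon1 ?_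
        have : ‖(s : ℂ) * (r : ℂ) + starRingEnd ℂ t * b'‖
            = s * ‖((r : ℝ) : ℂ) + I * b'‖ := by
          rw [ht, map_neg, map_mul, hcs, Complex.conj_I]
          rw [show (s : ℂ) * (r : ℂ) + -((s : ℂ) * -I) * b'
              = (s : ℂ) * (((r : ℝ) : ℂ) + I * b') by ring]
          rw [norm_mul, hsnorm]
        rw [this] at hcon2
        exact mul_left_cancel₀ (ne_of_gt hs0) hcon2
      have hTx : T x = y := by
        rw [hxrep, hTe, hyrep, hb'b, Complex.conj_ofReal]
      rw [hφWspan, hWspan, Submodule.map_span, Set.image_singleton]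
      congr 1
      rw [show T.toLinearEquiv.toLinearMap x = T x from rfl, hTx]
end

section
/- Let n > 1 be an integer and H a complex Hilbert space with dim H = 2n. Then there is no unitary or antiunitary operator T : H → H such that the complementation map coincides with conjugation by T on all rank-n orthogonal projections, i.e., such that I − P = T P T^{-1} for every rank-n orthogonal projection P on H. -/
open Module Submodule

open scoped InnerProductSpace

/-- Projection package: for any subspace `V` of a finite-dimensional space there is a
self-adjoint idempotent with range `V`, fixing `V`, and whose kernel lies in `Vᗮ`. -/
lemma complementation_aux_proj {H : Type*} [NormedAddCommGroup H] [InnerProductSpace ℂ H]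
    [FiniteDimensional ℂ H] (V : Submodule ℂ H) :
    ∃ P : H →L[ℂ] H, IsIdempotentElem P ∧ IsSelfAdjoint P ∧
      LinearMap.range (P : H →ₗ[ℂ] H) = V ∧ (∀ x ∈ V, P x = x) ∧
      (∀ y : H, P y = 0 → y ∈ Vᗮ) := by
  refine ⟨V.subtypeL ∘L orthogonalProjection V, ?_, isSelfAdjoint_starProjection V,
    ?_, ?_, ?_⟩
  · ext x
    simp [orthogonalProjection_mem_subspace_eq_self, Submodule.starProjection_eq_self_iff]
  · apply le_antisymm
    · rintro x ⟨y, rfl⟩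
      exact (orthogonalProjection V y).2
    · intro x hx
      exact ⟨x, by simp [Submodule.starProjection_eq_self_iff.mpr hx]⟩
  · intro x hx
    simp [Submodule.starProjection_eq_self_iff.mpr hx]
  · intro y hy
    have h1 : ((orthogonalProjection V y : H)) = 0 := hy
    exact Submodule.orthogonalProjectionOnto_eq_zero_iff.mp (Submodule.coe_eq_zero.mp h1)

/-- Core geometric contradiction: a nonzero vector cannot be orthogonal to every
`n`-dimensional subspace containing a fixed basis vector. -/
lemma complementation_aux_key {H : Type*} [NormedAddCommGroup H] [InnerProductSpace ℂ H]
    [FiniteDimensional ℂ H] (n : ℕ) (hn : 1 < n)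
    (b : OrthonormalBasis (Fin (2 * n)) ℂ H) (i0 : Fin (2 * n)) (y : H) (hy : y ≠ 0)
    (h : ∀ V : Submodule ℂ H, Module.finrank ℂ V = n → b i0 ∈ V → y ∈ Vᗮ) : False := by
  have hinner : ∀ j, ⟪b j, y⟫_ℂ = 0 := by
    intro j
    obtain ⟨s, hs0, hcard⟩ : ∃ s : Finset (Fin (2 * n)), ({i0, j} : Finset (Fin (2 * n))) ⊆ s ∧
        s.card = n := by
      have hc2 : ({i0, j} : Finset (Fin (2 * n))).card ≤ n := by
        refine le_trans (Finset.card_insert_le _ _) ?_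
        rw [Finset.card_singleton]; omega
      have hcu : n ≤ (Finset.univ : Finset (Fin (2 * n))).card := by
        rw [Finset.card_univ, Fintype.card_fin]; omega
      obtain ⟨s, h1, _, h3⟩ := Finset.exists_subsuperset_card_eq
        (Finset.subset_univ ({i0, j} : Finset (Fin (2 * n)))) hc2 hcu
      exact ⟨s, h1, h3⟩
    have hVrank : Module.finrank ℂ
        (Submodule.span ℂ (Set.range (fun i : s => b i))) = n := by
      have := finrank_span_eq_card (R := ℂ)
        (b.orthonormal.linearIndependent.comp ((↑) : s → Fin (2 * n)) Subtype.val_injective)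
      simpa [Fintype.card_coe, hcard, Function.comp_def] using this
    have h0s : i0 ∈ s := hs0 (Finset.mem_insert_self _ _)
    have hjs : j ∈ s := hs0 (by simp)
    have hb0 : b i0 ∈ Submodule.span ℂ (Set.range (fun i : s => b i)) :=
      Submodule.subset_span ⟨⟨i0, h0s⟩, rfl⟩
    have hbj : b j ∈ Submodule.span ℂ (Set.range (fun i : s => b i)) :=
      Submodule.subset_span ⟨⟨j, hjs⟩, rfl⟩
    exact (Submodule.mem_orthogonal _ y).mp (h _ hVrank hb0) (b j) hbj
  apply hy
  have hr : b.repr y = 0 := by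
    ext j
    rw [b.repr_apply_apply]
    exact hinner j
  have := congrArg b.repr.symm hr
  simpa using this

/-- If `dim H = 2n` with `n > 1`, there is no unitary or antiunitary operator `T` such
that `I − P = T P T⁻¹` for every rank-`n` orthogonal projection `P` on `H`. -/
theorem complementation_not_conjugation
    {H : Type*} [NormedAddCommGroup H] [InnerProductSpace ℂ H] [CompleteSpace H]
    (n : ℕ) (hn : 1 < n) (hdim : Module.finrank ℂ H = 2 * n) :
    ¬ ((∃ T : H ≃ₗᵢ[ℂ] H,
          ∀ P : H →L[ℂ] H, IsIdempotentElem P → IsSelfAdjoint P →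
            Module.finrank ℂ (LinearMap.range (P : H →ₗ[ℂ] H)) = n →
            ∀ x : H, x - P x = T (P (T.symm x))) ∨
       (∃ T : H ≃ₛₗᵢ[starRingEnd ℂ] H,
          ∀ P : H →L[ℂ] H, IsIdempotentElem P → IsSelfAdjoint P →
            Module.finrank ℂ (LinearMap.range (P : H →ₗ[ℂ] H)) = n →
            ∀ x : H, x - P x = T (P (T.symm x)))) := by
  have hfd : FiniteDimensional ℂ H := FiniteDimensional.of_finrank_pos (by omega)
  set b : OrthonormalBasis (Fin (2 * n)) ℂ H :=
    (stdOrthonormalBasis ℂ H).reindex (finCongr hdim) with hb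
  set i0 : Fin (2 * n) := ⟨0, by omega⟩ with hi0
  have hb0 : b i0 ≠ 0 := by
    intro h
    have := b.orthonormal.1 i0
    rw [h] at this
    simp at this
  rintro (⟨T, hT⟩ | ⟨T, hT⟩)
  · refine complementation_aux_key n hn b i0 (T.symm (b i0)) (by simp [hb0]) ?_
    intro V hV hmem
    obtain ⟨P, hPi, hPs, hPr, hPfix, hPker⟩ := complementation_aux_proj V
    have hrank : Module.finrank ℂ (LinearMap.range (P : H →ₗ[ℂ] H)) = n := by rw [hPr]; exact hV
    have key := hT P hPi hPs hrank (b i0)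
    rw [hPfix (b i0) hmem, sub_self] at key
    have h2 : P (T.symm (b i0)) = 0 := by
      have := key.symm
      rwa [← map_zero T, EmbeddingLike.apply_eq_iff_eq] at this
    exact hPker _ h2
  · refine complementation_aux_key n hn b i0 (T.symm (b i0)) (by simp [hb0]) ?_
    intro V hV hmem
    obtain ⟨P, hPi, hPs, hPr, hPfix, hPker⟩ := complementation_aux_proj V
    have hrank : Module.finrank ℂ (LinearMap.range (P : H →ₗ[ℂ] H)) = n := by rw [hPr]; exact hV
    have key := hT P hPi hPs hrank (b i0)
    rw [hPfix (b i0) hmem, sub_self] at key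
    have h2 : P (T.symm (b i0)) = 0 := by
      have := key.symm
      rwa [← map_zero T, EmbeddingLike.apply_eq_iff_eq] at this
    exact hPker _ h2
end

section
/- Let H be an infinite-dimensional complex Hilbert space, n > 1 an integer, and φ : P_n(H) → P_n(H) a map such that for every pair U, V ∈ P_n(H): ma(φ(U), φ(V)) = π/2 if and only if ma(U, V) = π/2, and ma(φ(U), φ(V)) = 0 if and only if ma(U, V) = 0. Then φ preserves adjacency: for all U, V ∈ P_n(H), if dim(U ∩ V) = n − 1 then dim(φ(U) ∩ φ(V)) = n − 1. -/
open scoped InnerProductSpace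
open Submodule Module Set

set_option maxHeartbeats 1000000

namespace AdjPrf

variable {H : Type*} [NormedAddCommGroup H] [InnerProductSpace ℂ H]

/-- The angle set defining `minAngle`. -/
def aset (U V : Submodule ℂ H) : Set ℝ :=
  {θ : ℝ | ∃ x ∈ U, ∃ y ∈ V, ‖x‖ = 1 ∧ ‖y‖ = 1 ∧
    θ = Real.arccos ‖(inner ℂ x y : ℂ)‖}

lemma minAngle_def (U V : Submodule ℂ H) : minAngle U V = sInf (aset U V) := rfl

lemma aset_bddBelow (U V : Submodule ℂ H) : BddBelow (aset U V) := by
  refine ⟨0, ?_⟩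
  rintro θ ⟨x, hx, y, hy, h1, h2, rfl⟩
  exact Real.arccos_nonneg _

lemma exists_unit (U : Submodule ℂ H) (h : U ≠ ⊥) : ∃ x ∈ U, ‖x‖ = 1 := by
  obtain ⟨x, hxU, hx0⟩ := (Submodule.ne_bot_iff U).1 h
  refine ⟨(‖x‖ : ℂ)⁻¹ • x, U.smul_mem _ hxU, ?_⟩
  rw [norm_smul]
  simp [norm_ne_zero_iff.2 hx0, inv_mul_cancel₀, norm_inv]

lemma aset_nonempty {U V : Submodule ℂ H} (hU : U ≠ ⊥) (hV : V ≠ ⊥) :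
    (aset U V).Nonempty := by
  obtain ⟨x, hx, hx1⟩ := exists_unit U hU
  obtain ⟨y, hy, hy1⟩ := exists_unit V hV
  exact ⟨_, x, hx, y, hy, hx1, hy1, rfl⟩

/-- Orthogonality of two subspaces. -/
def Orth (U V : Submodule ℂ H) : Prop := ∀ x ∈ U, ∀ y ∈ V, (inner ℂ x y : ℂ) = 0

lemma minAngle_eq_pi_div_two_iff {U V : Submodule ℂ H} (hU : U ≠ ⊥) (hV : V ≠ ⊥) :
    minAngle U V = Real.pi / 2 ↔ Orth U V := by
  constructor
  · intro h
    by_contra hc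
    simp only [Orth, not_forall] at hc
    obtain ⟨x, hxU, y, hyV, hxy⟩ := hc
    have hx0 : x ≠ 0 := by rintro rfl; simp at hxy
    have hy0 : y ≠ 0 := by rintro rfl; simp at hxy
    set x' := (‖x‖ : ℂ)⁻¹ • x with hx'
    set y' := (‖y‖ : ℂ)⁻¹ • y with hy'
    have hx'1 : ‖x'‖ = 1 := by
      rw [hx', norm_smul]; simp [norm_ne_zero_iff.2 hx0]
    have hy'1 : ‖y'‖ = 1 := by
      rw [hy', norm_smul]; simp [norm_ne_zero_iff.2 hy0]
    have hin : (0:ℝ) < ‖(inner ℂ x' y' : ℂ)‖ := by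
      rw [norm_pos_iff]
      rw [hx', hy', inner_smul_left, inner_smul_right]
      refine mul_ne_zero ?_ (mul_ne_zero ?_ hxy)
      · simp [norm_ne_zero_iff.2 hx0]
      · simp [norm_ne_zero_iff.2 hy0]
    have hmem : Real.arccos ‖(inner ℂ x' y' : ℂ)‖ ∈ aset U V :=
      ⟨x', U.smul_mem _ hxU, y', V.smul_mem _ hyV, hx'1, hy'1, rfl⟩
    have hle : minAngle U V ≤ Real.arccos ‖(inner ℂ x' y' : ℂ)‖ :=
      csInf_le (aset_bddBelow U V) hmem
    have hlt : Real.arccos ‖(inner ℂ x' y' : ℂ)‖ < Real.pi / 2 :=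
      Real.arccos_lt_pi_div_two.2 hin
    linarith [h ▸ hle]
  · intro hOrth
    have : aset U V = {Real.pi / 2} := by
      ext θ
      constructor
      · rintro ⟨x, hx, y, hy, h1, h2, rfl⟩
        rw [hOrth x hx y hy]
        simp [Real.arccos_zero]
      · rintro rfl
        obtain ⟨x, hx, hx1⟩ := exists_unit U hU
        obtain ⟨y, hy, hy1⟩ := exists_unit V hV
        exact ⟨x, hx, y, hy, hx1, hy1, by rw [hOrth x hx y hy]; simp [Real.arccos_zero]⟩
    rw [minAngle_def, this, csInf_singleton]

lemma minAngle_eq_zero_iff {U V : Submodule ℂ H} {n : ℕ} (hn : 0 < n)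
    (hU : finrank ℂ U = n) (hV : finrank ℂ V = n) :
    minAngle U V = 0 ↔ U ⊓ V ≠ ⊥ := by
  have hUfd : FiniteDimensional ℂ U := Module.finite_of_finrank_pos (by rw [hU]; exact hn)
  have hVfd : FiniteDimensional ℂ V := Module.finite_of_finrank_pos (by rw [hV]; exact hn)
  have hUnt : Nontrivial U := Module.nontrivial_of_finrank_pos (R := ℂ) (by rw [hU]; exact hn)
  have hVnt : Nontrivial V := Module.nontrivial_of_finrank_pos (R := ℂ) (by rw [hV]; exact hn)
  have hUb : U ≠ ⊥ := by
    intro h; rw [h] at hU; simp [finrank_bot] at hU; omega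
  have hVb : V ≠ ⊥ := by
    intro h; rw [h] at hV; simp [finrank_bot] at hV; omega
  constructor
  · intro h
    -- compactness argument
    set SU : Set U := Metric.sphere (0 : U) 1 with hSU
    set SV : Set V := Metric.sphere (0 : V) 1 with hSV
    have hSUc : IsCompact SU := isCompact_sphere _ _
    have hSVc : IsCompact SV := isCompact_sphere _ _
    have hSUne : SU.Nonempty := NormedSpace.sphere_nonempty.2 zero_le_one
    have hSVne : SV.Nonempty := NormedSpace.sphere_nonempty.2 zero_le_one
    have hprod : IsCompact (SU ×ˢ SV) := hSUc.prod hSVc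
    have hprodne : (SU ×ˢ SV).Nonempty := hSUne.prod hSVne
    have hcont : Continuous fun p : U × V => ‖(inner ℂ (p.1 : H) (p.2 : H) : ℂ)‖ := by
      have : Continuous fun p : U × V => ((p.1 : H), (p.2 : H)) :=
        (continuous_subtype_val.comp continuous_fst).prodMk
          (continuous_subtype_val.comp continuous_snd)
      exact (continuous_inner.comp this).norm
    obtain ⟨p₀, hp₀mem, hp₀max'⟩ := hprod.exists_isMaxOn hprodne hcont.continuousOn
    have hp₀max : ∀ p ∈ SU ×ˢ SV, ‖(inner ℂ (p.1 : H) (p.2 : H) : ℂ)‖ ≤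
        ‖(inner ℂ (p₀.1 : H) (p₀.2 : H) : ℂ)‖ := fun p hp => hp₀max' hp
    set s : ℝ := ‖(inner ℂ (p₀.1 : H) (p₀.2 : H) : ℂ)‖ with hs
    have hx₀n : ‖(p₀.1 : H)‖ = 1 := by
      have := hp₀mem.1; rw [hSU, Metric.mem_sphere, dist_zero_right] at this
      simpa using this
    have hy₀n : ‖(p₀.2 : H)‖ = 1 := by
      have := hp₀mem.2; rw [hSV, Metric.mem_sphere, dist_zero_right] at this
      simpa using this
    have hs1 : s ≤ 1 := by
      have := norm_inner_le_norm (𝕜 := ℂ) (p₀.1 : H) (p₀.2 : H)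
      rwa [hx₀n, hy₀n, mul_one] at this
    -- every element of aset is ≥ arccos s
    have hlb : ∀ θ ∈ aset U V, Real.arccos s ≤ θ := by
      rintro θ ⟨x, hx, y, hy, h1, h2, rfl⟩
      have hmem : ((⟨x, hx⟩ : U), (⟨y, hy⟩ : V)) ∈ SU ×ˢ SV := by
        constructor <;> simp [hSU, hSV, Submodule.norm_coe, h1, h2]
      have hle : ‖(inner ℂ x y : ℂ)‖ ≤ s := hp₀max _ hmem
      have h0 : (0:ℝ) ≤ ‖(inner ℂ x y : ℂ)‖ := norm_nonneg _
      rcases eq_or_lt_of_le hle with heq | hlt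
      · rw [heq]
      · exact le_of_lt (Real.strictAntiOn_arccos ⟨by linarith, by linarith⟩
          ⟨by linarith, hs1⟩ hlt)
    have harc : Real.arccos s ≤ 0 := by
      rw [← h, minAngle_def]
      exact le_csInf (aset_nonempty hUb hVb) hlb
    have harc0 : Real.arccos s = 0 := le_antisymm harc (Real.arccos_nonneg _)
    have hs_ge : (1:ℝ) ≤ s := Real.arccos_eq_zero.1 harc0
    have hseq : s = 1 := le_antisymm hs1 hs_ge
    -- equality in Cauchy-Schwarz
    have hx0 : (p₀.1 : H) ≠ 0 := by
      intro hc; rw [hc] at hx₀n; simp at hx₀n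
    have hy0 : (p₀.2 : H) ≠ 0 := by
      intro hc; rw [hc] at hy₀n; simp at hy₀n
    have : ‖(inner ℂ (p₀.1 : H) (p₀.2 : H) : ℂ)‖ = ‖(p₀.1 : H)‖ * ‖(p₀.2 : H)‖ := by
      rw [hx₀n, hy₀n, mul_one, ← hs, hseq]
    obtain ⟨r, hr0, hr⟩ := (norm_inner_eq_norm_iff hx0 hy0).1 this
    intro hbot
    have hmem : (p₀.2 : H) ∈ U ⊓ V := by
      constructor
      · rw [hr]; exact U.smul_mem _ p₀.1.2
      · exact p₀.2.2
    rw [hbot] at hmem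
    exact hy0 (by simpa using hmem)
  · intro h
    obtain ⟨z, hz, hz1⟩ := exists_unit _ h
    have hmem : (0:ℝ) ∈ aset U V := by
      refine ⟨z, hz.1, z, hz.2, hz1, hz1, ?_⟩
      rw [inner_self_eq_norm_sq_to_K (𝕜 := ℂ)]
      rw [hz1]
      norm_num [Real.arccos_one]
    have h1 : minAngle U V ≤ 0 := csInf_le (aset_bddBelow U V) hmem
    have h2 : 0 ≤ minAngle U V := by
      rw [minAngle_def]
      refine le_csInf (aset_nonempty hUb hVb) ?_
      rintro θ ⟨x, hx, y, hy, h1, h2, rfl⟩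
      exact Real.arccos_nonneg _
    linarith

end AdjPrf

namespace AdjPrf

variable {H : Type*} [NormedAddCommGroup H] [InnerProductSpace ℂ H]

lemma orth_of_gen {s t : Set H}
    (h : ∀ x ∈ s, ∀ y ∈ t, (inner ℂ x y : ℂ) = 0) :
    Orth (span ℂ s) (span ℂ t) := by
  intro x hx y hy
  have hx' : ∀ y' ∈ t, (inner ℂ x y' : ℂ) = 0 := by
    induction hx using Submodule.span_induction with
    | mem z hz => exact h z hz
    | zero => intro y' _; simp
    | add a b _ _ ha hb => intro y' hy'; rw [inner_add_left, ha y' hy', hb y' hy']; simp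
    | smul c a _ ha => intro y' hy'; rw [inner_smul_left, ha y' hy']; simp
  induction hy using Submodule.span_induction with
  | mem z hz => exact hx' z hz
  | zero => simp
  | add a b _ _ ha hb => rw [inner_add_right, ha, hb]; simp
  | smul c a _ ha => rw [inner_smul_right, ha]; simp

lemma orth_symm {U V : Submodule ℂ H} (h : Orth U V) : Orth V U := by
  intro x hx y hy
  have := h y hy x hx
  rw [← inner_conj_symm]
  simp [this]

lemma orth_of_le_orthogonal {A B S : Submodule ℂ H} (hA : A ≤ Sᗮ) (hB : B ≤ S) :
    Orth A B := by
  intro x hx y hy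
  rw [← inner_conj_symm]
  rw [(Submodule.mem_orthogonal S x).1 (hA hx) y (hB hy)]
  simp

lemma finrank_span_orthonormal {m : ℕ} {v : Fin m → H} (hv : Orthonormal ℂ v) :
    finrank ℂ (span ℂ (Set.range v)) = m := by
  rw [finrank_span_eq_card hv.linearIndependent, Fintype.card_fin]

lemma ne_bot_of_finrank_pos {W : Submodule ℂ H} {n : ℕ} (hn : 0 < n)
    (hW : finrank ℂ W = n) : W ≠ ⊥ := by
  intro h
  rw [h, finrank_bot] at hW
  omega

/-- nonzero pairwise-orthogonal vectors in a module are linearly independent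
(via normalizing). -/
lemma linearIndependent_of_orth {ι : Type*} {v : ι → H} (hne : ∀ i, v i ≠ 0)
    (horth : ∀ i j, i ≠ j → (inner ℂ (v i) (v j) : ℂ) = 0) :
    LinearIndependent ℂ v := by
  classical
  set w : ι → H := fun i => ((‖v i‖ : ℂ))⁻¹ • v i with hw
  have hwo : Orthonormal ℂ w := by
    rw [orthonormal_iff_ite]
    intro i j
    by_cases hij : i = j
    · subst hij
      simp only [hw, inner_smul_left, inner_smul_right, if_pos rfl]
      rw [inner_self_eq_norm_sq_to_K (𝕜 := ℂ)]
      have h0 : (‖v i‖ : ℂ) ≠ 0 := by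
        simpa using norm_ne_zero_iff.2 (hne i)
      simp only [map_inv₀, Complex.conj_ofReal, if_true]
      rw [pow_two]
      field_simp
      rfl
    · simp only [hw, inner_smul_left, inner_smul_right, if_neg hij, horth i j hij]
      simp
  have hli := hwo.linearIndependent
  have : v = fun i => (‖v i‖ : ℂ) • w i := by
    funext i
    rw [hw]
    rw [smul_smul]
    have h0 : (‖v i‖ : ℂ) ≠ 0 := by simpa using norm_ne_zero_iff.2 (hne i)
    rw [mul_inv_cancel₀ h0, one_smul]
  rw [this]
  apply hli.units_smul (w := fun i => Units.mk0 _ (by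
    simpa using norm_ne_zero_iff.2 (hne i) : (‖v i‖ : ℂ) ≠ 0))

/-- Key "line" lemma: if `W` has dimension `n`, contains `n` nonzero pairwise
orthogonal vectors `t k`, and `x ∈ W` is orthogonal to all `t k` for `k ≠ 0`,
then `x` is a multiple of `t 0`. -/
lemma line_lemma {n : ℕ} [NeZero n] {W : Submodule ℂ H} (hW : finrank ℂ W = n)
    {t : Fin n → H} (htW : ∀ k, t k ∈ W) (htne : ∀ k, t k ≠ 0)
    (htorth : ∀ k k', k ≠ k' → (inner ℂ (t k) (t k') : ℂ) = 0)
    {x : H} (hxW : x ∈ W) (hxorth : ∀ k, k ≠ 0 → (inner ℂ (t k) x : ℂ) = 0) :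
    ∃ c : ℂ, x = c • t 0 := by
  have hn : 0 < n := Nat.pos_of_ne_zero (NeZero.ne n)
  have hWfd : FiniteDimensional ℂ W := Module.finite_of_finrank_pos (by rw [hW]; exact hn)
  -- normalized family inside W
  set s : Fin n → W := fun k => ⟨((‖t k‖ : ℂ))⁻¹ • t k, W.smul_mem _ (htW k)⟩ with hs
  have hnorm : ∀ k, ((‖t k‖ : ℂ)) ≠ 0 := fun k => by
    simpa using norm_ne_zero_iff.2 (htne k)
  have hso : Orthonormal ℂ s := by
    rw [orthonormal_iff_ite]
    intro i j
    have : (inner ℂ (s i) (s j) : ℂ) = inner ℂ ((s i : H)) ((s j : H)) :=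
      Submodule.coe_inner W _ _
    rw [this]
    by_cases hij : i = j
    · subst hij
      simp only [hs, inner_smul_left, inner_smul_right, if_pos rfl]
      rw [inner_self_eq_norm_sq_to_K (𝕜 := ℂ)]
      simp only [map_inv₀, Complex.conj_ofReal, if_true]
      rw [pow_two]
      field_simp
      exact div_self (pow_ne_zero 2 (hnorm i))
    · simp only [hs, inner_smul_left, inner_smul_right, if_neg hij, htorth i j hij]
      simp
  have hspan : ⊤ ≤ span ℂ (Set.range s) := by
    haveI : Nonempty (Fin n) := ⟨0⟩
    have hli := hso.linearIndependent
    have hcard : Fintype.card (Fin n) = finrank ℂ W := by rw [Fintype.card_fin, hW]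
    exact (hli.span_eq_top_of_card_eq_finrank hcard).ge
  let b : OrthonormalBasis (Fin n) ℂ W := OrthonormalBasis.mk hso hspan
  have hb : ∀ k, b k = s k := fun k => by simp [b, OrthonormalBasis.coe_mk]
  set xw : W := ⟨x, hxW⟩ with hxw
  have hrepr := b.sum_repr xw
  have hcoeff : ∀ k, k ≠ 0 → b.repr xw k = 0 := by
    intro k hk
    rw [OrthonormalBasis.repr_apply_apply, hb k]
    have : (inner ℂ (s k) xw : ℂ) = inner ℂ ((s k : H)) x := Submodule.coe_inner W _ _
    rw [this, hs]
    simp only [inner_smul_left]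
    rw [hxorth k hk]
    simp
  have hsum : ∑ i : Fin n, b.repr xw i • b i = b.repr xw 0 • b 0 := by
    rw [Finset.sum_eq_single (0 : Fin n)]
    · intro k _ hk
      rw [hcoeff k hk, zero_smul]
    · intro h
      exact absurd (Finset.mem_univ _) h
  have hx : xw = b.repr xw 0 • s 0 := by
    rw [← hb 0, ← hsum, hrepr]
  refine ⟨b.repr xw 0 * ((‖t 0‖ : ℂ))⁻¹, ?_⟩
  have hcoe := congrArg (Subtype.val) hx
  rw [hxw] at hcoe
  simp only [hs, SetLike.mk_smul_mk] at hcoe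
  rw [hcoe]
  simp [smul_smul, hxw]

end AdjPrf

namespace AdjPrf

variable {H : Type*} [NormedAddCommGroup H] [InnerProductSpace ℂ H]

/-- Soundness of the certificate: the configuration of witnesses forces
`dim (U ⊓ V) = n - 1`. -/
lemma soundness {n : ℕ} [NeZero n] (hn : 1 < n) {U V : Submodule ℂ H}
    (hU : finrank ℂ U = n) (hV : finrank ℂ V = n)
    (T : Fin (n-1) → Submodule ℂ H) (E : Fin n → Submodule ℂ H) (F : Submodule ℂ H)
    (hTrk : ∀ i, finrank ℂ (T i) = n)
    (h1 : ∀ i j, i ≠ j → Orth (T i) (T j))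
    (h2U : ∀ i, T i ⊓ U ≠ ⊥) (h2V : ∀ i, T i ⊓ V ≠ ⊥)
    (h3 : ∀ k k', k ≠ k' → Orth (E k) (E k'))
    (h4 : ∀ i k, T i ⊓ E k ≠ ⊥)
    (h5U : ∀ k, k ≠ 0 → Orth (E k) U) (h5V : ∀ k, k ≠ 0 → Orth (E k) V)
    (h6U : F ⊓ U ≠ ⊥) (h6V : F ⊓ V = ⊥) :
    finrank ℂ (U ⊓ V : Submodule ℂ H) = n - 1 := by
  have hUfd : FiniteDimensional ℂ U := Module.finite_of_finrank_pos (by omega)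
  have hVfd : FiniteDimensional ℂ V := Module.finite_of_finrank_pos (by omega)
  -- pick nonzero vectors t i k ∈ T i ⊓ E k
  have hch : ∀ i k, ∃ z : H, z ∈ T i ⊓ E k ∧ z ≠ 0 := by
    intro i k
    obtain ⟨z, hz, hz0⟩ := (Submodule.ne_bot_iff _).1 (h4 i k)
    exact ⟨z, hz, hz0⟩
  choose t ht htne using hch
  have htT : ∀ i k, t i k ∈ T i := fun i k => (ht i k).1
  have htE : ∀ i k, t i k ∈ E k := fun i k => (ht i k).2
  have htorth : ∀ i, ∀ k k', k ≠ k' → (inner ℂ (t i k) (t i k') : ℂ) = 0 :=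
    fun i k k' hkk => h3 k k' hkk (t i k) (htE i k) (t i k') (htE i k')
  -- pick nonzero x i ∈ T i ⊓ U, y i ∈ T i ⊓ V
  have hchx : ∀ i, ∃ z : H, z ∈ T i ⊓ U ∧ z ≠ 0 := by
    intro i
    obtain ⟨z, hz, hz0⟩ := (Submodule.ne_bot_iff _).1 (h2U i)
    exact ⟨z, hz, hz0⟩
  have hchy : ∀ i, ∃ z : H, z ∈ T i ⊓ V ∧ z ≠ 0 := by
    intro i
    obtain ⟨z, hz, hz0⟩ := (Submodule.ne_bot_iff _).1 (h2V i)
    exact ⟨z, hz, hz0⟩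
  choose x hx hxne using hchx
  choose y hy hyne using hchy
  -- each x i and y i is a multiple of t i 0
  have hline : ∀ (i : Fin (n-1)) (z : H), z ∈ T i → z ∈ U ⊔ V → ∃ c : ℂ, z = c • t i 0 := by
    intro i z hzT hzUV
    refine line_lemma (hTrk i) (htT i) (htne i) (htorth i) hzT ?_
    intro k hk
    -- t i k ∈ E k with k ≠ 0, orthogonal to U and V hence to U ⊔ V
    have hU' : ∀ u ∈ U, (inner ℂ (t i k) u : ℂ) = 0 := fun u hu =>
      h5U k hk (t i k) (htE i k) u hu
    have hV' : ∀ v ∈ V, (inner ℂ (t i k) v : ℂ) = 0 := fun v hv =>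
      h5V k hk (t i k) (htE i k) v hv
    -- membership in sup
    have : ∀ w ∈ (U ⊔ V : Submodule ℂ H), (inner ℂ (t i k) w : ℂ) = 0 := by
      intro w hw
      rw [Submodule.mem_sup] at hw
      obtain ⟨u, hu, v, hv, rfl⟩ := hw
      rw [inner_add_right, hU' u hu, hV' v hv, add_zero]
    exact this z hzUV
  have hxU : ∀ i, x i ∈ U := fun i => (hx i).2
  have hyV : ∀ i, y i ∈ V := fun i => (hy i).2
  have hxUV : ∀ i, x i ∈ U ⊓ V := by
    intro i
    obtain ⟨c, hc⟩ := hline i (x i) (hx i).1 (Submodule.mem_sup_left (hxU i))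
    obtain ⟨d, hd⟩ := hline i (y i) (hy i).1 (Submodule.mem_sup_right (hyV i))
    have hc0 : c ≠ 0 := by
      rintro rfl; rw [zero_smul] at hc; exact hxne i hc
    have hd0 : d ≠ 0 := by
      rintro rfl; rw [zero_smul] at hd; exact hyne i hd
    refine ⟨hxU i, ?_⟩
    have : x i = (c * d⁻¹) • y i := by
      rw [hd, hc, smul_smul, mul_assoc, inv_mul_cancel₀ hd0, mul_one]
    rw [this]
    exact V.smul_mem _ (hyV i)
  -- the x i are pairwise orthogonal and nonzero, all in U ⊓ V
  have hxorth : ∀ i j, i ≠ j → (inner ℂ (x i) (x j) : ℂ) = 0 := fun i j hij =>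
    h1 i j hij (x i) (hx i).1 (x j) (hx j).1
  -- linear independence in the subtype
  haveI hUVfd : FiniteDimensional ℂ (U ⊓ V : Submodule ℂ H) :=
    Submodule.finiteDimensional_of_le (V := H) (inf_le_left)
  set xs : Fin (n-1) → (U ⊓ V : Submodule ℂ H) := fun i => ⟨x i, hxUV i⟩ with hxs
  have hxsli : LinearIndependent ℂ xs := by
    have h1' : ∀ i, xs i ≠ 0 := by
      intro i hc
      apply hxne i
      have := congrArg (Subtype.val) hc
      exact this
    have h2' : ∀ i j, i ≠ j → (inner ℂ (xs i) (xs j) : ℂ) = 0 := by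
      intro i j hij
      rw [Submodule.coe_inner]
      exact hxorth i j hij
    exact linearIndependent_of_orth h1' h2'
  have hge : n - 1 ≤ finrank ℂ (U ⊓ V : Submodule ℂ H) := by
    have := hxsli.fintype_card_le_finrank
    simpa using this
  have hle : finrank ℂ (U ⊓ V : Submodule ℂ H) ≤ n := by
    have := Submodule.finrank_mono (inf_le_left : U ⊓ V ≤ U)
    omega
  have hneq : finrank ℂ (U ⊓ V : Submodule ℂ H) ≠ n := by
    intro hc
    have heq : U ⊓ V = U := by
      apply Submodule.eq_of_le_of_finrank_le inf_le_left
      omega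
    have hUV : U ≤ V := by
      intro z hz
      have : z ∈ U ⊓ V := heq.symm ▸ hz
      exact this.2
    obtain ⟨z, hz, hz0⟩ := (Submodule.ne_bot_iff _).1 h6U
    have : z ∈ F ⊓ V := ⟨hz.1, hUV hz.2⟩
    rw [h6V] at this
    exact hz0 (by simpa using this)
  omega

end AdjPrf

namespace AdjPrf

variable {H : Type*} [NormedAddCommGroup H] [InnerProductSpace ℂ H]

lemma orthonormal_sum_elim {α β : Type*} {k : α → H} {e : β → H}
    (hk : Orthonormal ℂ k) (he : Orthonormal ℂ e)
    (hke : ∀ a b, (inner ℂ (k a) (e b) : ℂ) = 0) :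
    Orthonormal ℂ (Sum.elim k e) := by
  classical
  rw [orthonormal_iff_ite]
  rintro (a | b) (a' | b')
  · simp only [Sum.elim_inl]
    rw [orthonormal_iff_ite.1 hk a a']
    by_cases h : a = a' <;> simp [h]
  · simp only [Sum.elim_inl, Sum.elim_inr, hke a b']
    simp
  · simp only [Sum.elim_inl, Sum.elim_inr]
    rw [← inner_conj_symm, hke a' b]
    simp
  · simp only [Sum.elim_inr]
    rw [orthonormal_iff_ite.1 he b b']
    by_cases h : b = b' <;> simp [h]

lemma orthonormal_fin_cons {m : ℕ} {x : H} {v : Fin m → H}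
    (hx : ‖x‖ = 1) (hv : Orthonormal ℂ v)
    (hxv : ∀ j, (inner ℂ x (v j) : ℂ) = 0) :
    Orthonormal ℂ (Fin.cons x v : Fin (m+1) → H) := by
  classical
  rw [orthonormal_iff_ite]
  intro i j
  refine Fin.cases ?_ ?_ i <;> clear i
  · refine Fin.cases ?_ ?_ j <;> clear j
    · simp only [Fin.cons_zero, if_pos rfl]
      rw [inner_self_eq_norm_sq_to_K (𝕜 := ℂ), hx]
      norm_num
    · intro j
      simp only [Fin.cons_zero, Fin.cons_succ, hxv j]
      rw [if_neg (Fin.succ_ne_zero j).symm]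
  · intro i
    refine Fin.cases ?_ ?_ j <;> clear j
    · simp only [Fin.cons_zero, Fin.cons_succ]
      rw [← inner_conj_symm, hxv i]
      rw [if_neg (Fin.succ_ne_zero i)]
      simp
    · intro j
      simp only [Fin.cons_succ]
      rw [orthonormal_iff_ite.1 hv i j]
      by_cases h : i = j
      · simp [h]
      · rw [if_neg h, if_neg (fun hc => h (Fin.succ_injective _ hc))]

lemma exists_orthonormal_perp [CompleteSpace H] (hH : ¬ FiniteDimensional ℂ H)
    (S : Submodule ℂ H) [FiniteDimensional ℂ S] (m : ℕ) :
    ∃ e : Fin m → H, Orthonormal ℂ e ∧ ∀ j, e j ∈ Sᗮ := by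
  induction m with
  | zero =>
    refine ⟨fun j => 0, ?_, fun j => j.elim0⟩
    rw [orthonormal_iff_ite]
    intro i
    exact i.elim0
  | succ m ih =>
    obtain ⟨e, he, heS⟩ := ih
    set S' : Submodule ℂ H := S ⊔ span ℂ (Set.range e) with hS'
    haveI : FiniteDimensional ℂ (span ℂ (Set.range e)) :=
      FiniteDimensional.span_of_finite ℂ (Set.finite_range e)
    haveI : FiniteDimensional ℂ S' := Submodule.finiteDimensional_sup _ _
    have hS'top : S' ≠ ⊤ := by
      intro hc
      apply hH
      have h2 : FiniteDimensional ℂ (⊤ : Submodule ℂ H) := hc ▸ ‹FiniteDimensional ℂ S'›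
      exact Module.Finite.equiv (Submodule.topEquiv (R := ℂ) (M := H))
    have hbot : S'ᗮ ≠ ⊥ := fun hc => hS'top (Submodule.orthogonal_eq_bot_iff.1 hc)
    obtain ⟨v, hv, hv0⟩ := (Submodule.ne_bot_iff _).1 hbot
    set v' : H := ((‖v‖ : ℂ))⁻¹ • v with hv'
    have hv'S' : v' ∈ S'ᗮ := Submodule.smul_mem _ _ hv
    have hv'1 : ‖v'‖ = 1 := by
      rw [hv', norm_smul]
      simp [norm_ne_zero_iff.2 hv0]
    have hv'orth : ∀ j, (inner ℂ v' (e j) : ℂ) = 0 := by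
      intro j
      have hej : e j ∈ S' := by
        apply Submodule.mem_sup_right
        exact Submodule.subset_span (Set.mem_range_self j)
      rw [← inner_conj_symm]
      rw [(Submodule.mem_orthogonal S' v').1 hv'S' (e j) hej]
      simp
    refine ⟨Fin.snoc e v', ?_, ?_⟩
    · -- use cons lemma via reversing? prove directly
      rw [orthonormal_iff_ite]
      intro i j
      refine Fin.lastCases ?_ ?_ i <;> clear i
      · refine Fin.lastCases ?_ ?_ j <;> clear j
        · simp only [Fin.snoc_last, if_pos rfl]
          rw [inner_self_eq_norm_sq_to_K (𝕜 := ℂ), hv'1]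
          norm_num
        · intro j
          simp only [Fin.snoc_last, Fin.snoc_castSucc, hv'orth j]
          rw [if_neg (Fin.castSucc_lt_last j).ne']
      · intro i
        refine Fin.lastCases ?_ ?_ j <;> clear j
        · simp only [Fin.snoc_last, Fin.snoc_castSucc]
          rw [← inner_conj_symm, hv'orth i]
          rw [if_neg (Fin.castSucc_lt_last i).ne]
          simp
        · intro j
          simp only [Fin.snoc_castSucc]
          rw [orthonormal_iff_ite.1 he i j]
          by_cases h : i = j
          · simp [h]
          · rw [if_neg h, if_neg (fun hc => h (Fin.castSucc_injective _ hc))]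
    · intro j
      refine Fin.lastCases ?_ ?_ j <;> clear j
      · rw [Fin.snoc_last]
        exact Submodule.orthogonal_le le_sup_left hv'S'
      · intro j
        rw [Fin.snoc_castSucc]
        exact heS j

end AdjPrf

namespace AdjPrf

variable {H : Type*} [NormedAddCommGroup H] [InnerProductSpace ℂ H]

lemma orth_span_comp {γ : Type*} {ν : γ → H} (hν : Orthonormal ℂ ν)
    {q q' : ℕ} {a : Fin q → γ} {b : Fin q' → γ}
    (hab : ∀ s t, a s ≠ b t) :
    Orth (span ℂ (Set.range (ν ∘ a))) (span ℂ (Set.range (ν ∘ b))) := by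
  apply orth_of_gen
  rintro x ⟨s, rfl⟩ y ⟨t, rfl⟩
  exact hν.2 (hab s t)

/-- Completeness: if `dim (U ⊓ V) = p + 1` where `dim U = dim V = p + 2`, in an
infinite-dimensional Hilbert space there is a certificate. -/
lemma completeness [CompleteSpace H] (hH : ¬ FiniteDimensional ℂ H)
    {p : ℕ} {U V : Submodule ℂ H}
    (hU : finrank ℂ U = p + 2) (hV : finrank ℂ V = p + 2)
    (hUV : finrank ℂ (U ⊓ V : Submodule ℂ H) = p + 1) :
    ∃ (T : Fin (p+1) → Submodule ℂ H) (E : Fin (p+2) → Submodule ℂ H)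
      (F : Submodule ℂ H),
      (∀ i, finrank ℂ (T i) = p + 2) ∧ (∀ k, finrank ℂ (E k) = p + 2) ∧
      finrank ℂ F = p + 2 ∧
      (∀ i j, i ≠ j → Orth (T i) (T j)) ∧
      (∀ i, T i ⊓ U ≠ ⊥) ∧ (∀ i, T i ⊓ V ≠ ⊥) ∧
      (∀ k k', k ≠ k' → Orth (E k) (E k')) ∧
      (∀ i k, T i ⊓ E k ≠ ⊥) ∧
      (∀ k, k ≠ 0 → Orth (E k) U) ∧ (∀ k, k ≠ 0 → Orth (E k) V) ∧
      (F ⊓ U ≠ ⊥) ∧ (F ⊓ V = ⊥) := by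
  classical
  haveI hUfd : FiniteDimensional ℂ U := Module.finite_of_finrank_pos (by omega)
  haveI hVfd : FiniteDimensional ℂ V := Module.finite_of_finrank_pos (by omega)
  set K : Submodule ℂ H := U ⊓ V with hK
  set S : Submodule ℂ H := U ⊔ V with hS
  haveI hKfd : FiniteDimensional ℂ K := Submodule.finiteDimensional_of_le (inf_le_left)
  haveI hSfd : FiniteDimensional ℂ S := Submodule.finiteDimensional_sup _ _
  -- orthonormal basis of K
  set bK := stdOrthonormalBasis ℂ K with hbK
  set k : Fin (p+1) → H := fun i => (bK (Fin.cast hUV.symm i) : H) with hk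
  have hkK : ∀ i, k i ∈ K := fun i => (bK (Fin.cast hUV.symm i)).2
  have hkon : Orthonormal ℂ k := by
    rw [orthonormal_iff_ite]
    intro i j
    have : (inner ℂ (k i) (k j) : ℂ)
        = inner ℂ (bK (Fin.cast hUV.symm i)) (bK (Fin.cast hUV.symm j)) :=
      (Submodule.coe_inner K _ _).symm
    rw [this, orthonormal_iff_ite.1 bK.orthonormal]
    by_cases h : i = j
    · simp [h]
    · rw [if_neg (fun hc => h (by simpa using (Fin.cast_injective _ hc))), if_neg h]
  -- a unit vector in U \ V
  have hUneV : ¬ (U ≤ V) := by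
    intro hle
    have hKU : K = U := by rw [hK, inf_of_le_left hle]
    rw [hKU] at hUV
    omega
  obtain ⟨u₀, hu₀U, hu₀V⟩ := SetLike.not_le_iff_exists.1 hUneV
  have hu₀0 : u₀ ≠ 0 := fun hc => hu₀V (hc ▸ V.zero_mem)
  set u : H := ((‖u₀‖ : ℂ))⁻¹ • u₀ with hu
  have huU : u ∈ U := U.smul_mem _ hu₀U
  have huV : u ∉ V := by
    intro hc
    apply hu₀V
    have : ((‖u₀‖ : ℂ)) • u ∈ V := V.smul_mem _ hc
    rw [hu, smul_smul, mul_inv_cancel₀ (by simpa using norm_ne_zero_iff.2 hu₀0),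
      one_smul] at this
    exact this
  have hu1 : ‖u‖ = 1 := by
    rw [hu, norm_smul]
    simp [norm_ne_zero_iff.2 hu₀0]
  -- fresh orthonormal vectors orthogonal to S
  obtain ⟨e₀, he₀, he₀S⟩ := exists_orthonormal_perp hH S
    (Fintype.card ((Fin (p+1) × Fin (p+1)) ⊕ (Fin (p+2) ⊕ Fin (p+1))))
  set e : ((Fin (p+1) × Fin (p+1)) ⊕ (Fin (p+2) ⊕ Fin (p+1))) → H :=
    e₀ ∘ (Fintype.equivFin _) with he
  have heon : Orthonormal ℂ e := he₀.comp _ (Fintype.equivFin _).injective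
  have heS : ∀ b, e b ∈ Sᗮ := fun b => he₀S _
  -- master orthonormal family
  set ν : (Fin (p+1) ⊕ ((Fin (p+1) × Fin (p+1)) ⊕ (Fin (p+2) ⊕ Fin (p+1)))) → H :=
    Sum.elim k e with hν
  have hcross : ∀ a b, (inner ℂ (k a) (e b) : ℂ) = 0 := by
    intro a b
    exact (Submodule.mem_orthogonal S (e b)).1 (heS b) (k a)
      (le_sup_left (a := U) (b := V) ((inf_le_left : U ⊓ V ≤ U) (hkK a)))
  have hνon : Orthonormal ℂ ν := orthonormal_sum_elim hkon heon hcross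
  -- index maps
  set mT : Fin (p+1) → Fin (p+2) → (Fin (p+1) ⊕ ((Fin (p+1) × Fin (p+1)) ⊕ (Fin (p+2) ⊕ Fin (p+1)))) :=
    fun i => Fin.cons (Sum.inl i) (fun j => Sum.inr (Sum.inl (i, j))) with hmT
  set mE0 : Fin (p+2) → (Fin (p+1) ⊕ ((Fin (p+1) × Fin (p+1)) ⊕ (Fin (p+2) ⊕ Fin (p+1)))) :=
    Fin.cons (Sum.inr (Sum.inr (Sum.inl 0))) (fun i => Sum.inl i) with hmE0
  set mE1 : Fin (p+1) → Fin (p+2) → (Fin (p+1) ⊕ ((Fin (p+1) × Fin (p+1)) ⊕ (Fin (p+2) ⊕ Fin (p+1)))) :=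
    fun m => Fin.cons (Sum.inr (Sum.inr (Sum.inl m.succ)))
      (fun i => Sum.inr (Sum.inl (i, m))) with hmE1
  set mE : Fin (p+2) → Fin (p+2) → (Fin (p+1) ⊕ ((Fin (p+1) × Fin (p+1)) ⊕ (Fin (p+2) ⊕ Fin (p+1)))) := Fin.cons mE0 mE1 with hmE
  set hfam : Fin (p+1) → H := fun j => e (Sum.inr (Sum.inr j)) with hhfam
  set T : Fin (p+1) → Submodule ℂ H :=
    fun i => span ℂ (Set.range (ν ∘ mT i)) with hT
  set E : Fin (p+2) → Submodule ℂ H :=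
    fun kk => span ℂ (Set.range (ν ∘ mE kk)) with hE
  set F : Submodule ℂ H := span ℂ (Set.range (Fin.cons u hfam : Fin (p+2) → H)) with hF
  -- injectivity of index maps
  have hmTinj : ∀ i, Function.Injective (mT i) := by
    intro i
    rw [hmT]
    rw [Fin.cons_injective_iff]
    constructor
    · rintro ⟨j, hj⟩
      simp at hj
    · intro a b hab
      simp only [Sum.inr.injEq, Sum.inl.injEq, Prod.mk.injEq] at hab
      exact hab.2
  have hmE0inj : Function.Injective mE0 := by
    rw [hmE0, Fin.cons_injective_iff]
    constructor
    · rintro ⟨j, hj⟩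
      simp at hj
    · intro a b hab
      simpa [Sum.inl.injEq] using hab
  have hmE1inj : ∀ m, Function.Injective (mE1 m) := by
    intro m
    rw [hmE1, Fin.cons_injective_iff]
    constructor
    · rintro ⟨j, hj⟩
      simp at hj
    · intro a b hab
      simp only [Sum.inr.injEq, Sum.inl.injEq, Prod.mk.injEq] at hab
      exact hab.1
  -- basic membership facts
  have huS : u ∈ S := Submodule.mem_sup_left huU
  have hkS : ∀ a, k a ∈ S :=
    fun a => Submodule.mem_sup_left ((inf_le_left : U ⊓ V ≤ U) (hkK a))
  have hSperp : ∀ x, x ∈ S → ∀ b, (inner ℂ x (e b) : ℂ) = 0 :=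
    fun x hx b => (Submodule.mem_orthogonal S (e b)).1 (heS b) x hx
  -- finranks
  have hTrk : ∀ i, finrank ℂ (T i) = p + 2 := by
    intro i
    rw [hT]
    exact finrank_span_orthonormal (hνon.comp _ (hmTinj i))
  have hErk : ∀ kk, finrank ℂ (E kk) = p + 2 := by
    intro kk
    rw [hE]
    refine finrank_span_orthonormal (hνon.comp _ ?_)
    refine Fin.cases ?_ (fun m => ?_) kk
    · rw [hmE, Fin.cons_zero]; exact hmE0inj
    · rw [hmE, Fin.cons_succ]; exact hmE1inj m
  have hhon : Orthonormal ℂ hfam := by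
    rw [hhfam]
    exact heon.comp _ (fun a b hab => by simpa using hab)
  have hFon : Orthonormal ℂ (Fin.cons u hfam : Fin (p+2) → H) :=
    orthonormal_fin_cons hu1 hhon (fun j => hSperp u huS _)
  have hFrk : finrank ℂ F = p + 2 := by
    rw [hF]
    exact finrank_span_orthonormal hFon
  -- orthogonality of the T's
  have h1 : ∀ i j, i ≠ j → Orth (T i) (T j) := by
    intro i j hij
    rw [hT]
    refine orth_span_comp hνon ?_
    intro s t
    simp only [hmT]
    refine Fin.cases ?_ (fun s' => ?_) s <;> refine Fin.cases ?_ (fun t' => ?_) t <;>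
      simp [Fin.cons_zero, Fin.cons_succ, hij, Prod.ext_iff]
  -- orthogonality of the E's
  have h3 : ∀ kk kk', kk ≠ kk' → Orth (E kk) (E kk') := by
    intro kk kk' hne
    rw [hE]
    refine orth_span_comp hνon ?_
    intro s t
    revert hne
    refine Fin.cases ?_ (fun m => ?_) kk <;> refine Fin.cases ?_ (fun m' => ?_) kk' <;>
        intro hne
    · exact absurd rfl hne
    · simp only [hmE, hmE0, hmE1, Fin.cons_zero, Fin.cons_succ]
      refine Fin.cases ?_ (fun s' => ?_) s <;> refine Fin.cases ?_ (fun t' => ?_) t <;>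
        simp [Fin.cons_zero, Fin.cons_succ, (Fin.succ_ne_zero m').symm]
    · simp only [hmE, hmE0, hmE1, Fin.cons_zero, Fin.cons_succ]
      refine Fin.cases ?_ (fun s' => ?_) s <;> refine Fin.cases ?_ (fun t' => ?_) t <;>
        simp [Fin.cons_zero, Fin.cons_succ, Fin.succ_ne_zero m]
    · have hmm' : m ≠ m' := fun h => hne (by rw [h])
      have hsucc : m.succ ≠ m'.succ := fun h => hmm' (Fin.succ_injective _ h)
      simp only [hmE, hmE0, hmE1, Fin.cons_zero, Fin.cons_succ]
      refine Fin.cases ?_ (fun s' => ?_) s <;> refine Fin.cases ?_ (fun t' => ?_) t <;>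
        simp [Fin.cons_zero, Fin.cons_succ, hsucc, hmm', Prod.ext_iff]
  -- intersections of T's with U and V
  have hkT : ∀ i, k i ∈ T i := by
    intro i
    rw [hT]
    apply Submodule.subset_span
    exact ⟨0, by simp [hmT, hν, Fin.cons_zero]⟩
  have hkne : ∀ (i : Fin (p+1)), k i ≠ 0 := by
    intro i
    have := hkon.1 i
    intro hc
    rw [hc] at this
    simp at this
  have h2U : ∀ i, T i ⊓ U ≠ ⊥ := by
    intro i
    rw [Submodule.ne_bot_iff]
    exact ⟨k i, ⟨hkT i, (Submodule.mem_inf.1 (hkK i)).1⟩, hkne i⟩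
  have h2V : ∀ i, T i ⊓ V ≠ ⊥ := by
    intro i
    rw [Submodule.ne_bot_iff]
    exact ⟨k i, ⟨hkT i, (Submodule.mem_inf.1 (hkK i)).2⟩, hkne i⟩
  -- intersections of T's with E's
  have hene : ∀ b, e b ≠ 0 := by
    intro b hc
    have := heon.1 b
    rw [hc] at this
    simp at this
  have h4 : ∀ i kk, T i ⊓ E kk ≠ ⊥ := by
    intro i kk
    rw [Submodule.ne_bot_iff]
    refine Fin.cases ?_ (fun m => ?_) kk
    · refine ⟨k i, ⟨hkT i, ?_⟩, hkne i⟩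
      rw [hE]
      apply Submodule.subset_span
      exact ⟨i.succ, by simp [hmE, hmE0, hν, Fin.cons_zero, Fin.cons_succ]⟩
    · refine ⟨e (Sum.inl (i, m)), ⟨?_, ?_⟩, hene _⟩
      · rw [hT]
        apply Submodule.subset_span
        exact ⟨m.succ, by simp [hmT, hν, Fin.cons_succ]⟩
      · rw [hE]
        apply Submodule.subset_span
        exact ⟨i.succ, by simp [hmE, hmE1, hν, Fin.cons_succ]⟩
  -- E k for k ≠ 0 is orthogonal to U and V
  have hEperp : ∀ (m : Fin (p+1)), E m.succ ≤ Sᗮ := by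
    intro m
    rw [hE, Submodule.span_le]
    rintro x ⟨s, rfl⟩
    refine Fin.cases ?_ (fun s' => ?_) s
    · simp only [Function.comp_apply, hmE, hmE1, Fin.cons_succ, Fin.cons_zero, hν,
        Sum.elim_inr]
      exact heS _
    · simp only [Function.comp_apply, hmE, hmE1, Fin.cons_succ, hν, Sum.elim_inr]
      exact heS _
  have h5U : ∀ kk, kk ≠ 0 → Orth (E kk) U := by
    intro kk
    refine Fin.cases ?_ (fun m _ => ?_) kk
    · intro h; exact absurd rfl h
    · exact orth_of_le_orthogonal (hEperp m) le_sup_left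
  have h5V : ∀ kk, kk ≠ 0 → Orth (E kk) V := by
    intro kk
    refine Fin.cases ?_ (fun m _ => ?_) kk
    · intro h; exact absurd rfl h
    · exact orth_of_le_orthogonal (hEperp m) le_sup_right
  -- intersections of F
  have huF : u ∈ F := by
    rw [hF]
    apply Submodule.subset_span
    exact ⟨0, by simp [Fin.cons_zero]⟩
  have h6U : F ⊓ U ≠ ⊥ := by
    rw [Submodule.ne_bot_iff]
    refine ⟨u, ⟨huF, huU⟩, ?_⟩
    intro hc
    rw [hc] at hu1
    simp at hu1
  have h6V : F ⊓ V = ⊥ := by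
    rw [eq_bot_iff]
    rintro x ⟨hxF, hxV⟩
    rw [Submodule.mem_bot]
    rw [hF] at hxF
    obtain ⟨c, hc⟩ := (mem_span_range_iff_exists_fun ℂ).1 hxF
    rw [Fin.sum_univ_succ] at hc
    simp only [Fin.cons_zero, Fin.cons_succ] at hc
    set y : H := ∑ j : Fin (p+1), c j.succ • hfam j with hy
    have hyS : y ∈ Sᗮ := by
      rw [hy]
      exact Submodule.sum_mem _ (fun j _ => Submodule.smul_mem _ _ (heS _))
    have hxS : x ∈ S := Submodule.mem_sup_right hxV
    have hy2 : y = x - c 0 • u := by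
      rw [← hc]
      abel
    have hyS' : y ∈ S := by
      rw [hy2]
      exact Submodule.sub_mem _ hxS (Submodule.smul_mem _ _ huS)
    have hy0 : y = 0 :=
      (Submodule.disjoint_def.1 (Submodule.orthogonal_disjoint S)) y hyS' hyS
    have hxu : x = c 0 • u := by
      rw [← hc, hy0, add_zero]
    by_cases hc0 : c 0 = 0
    · rw [hxu, hc0, zero_smul]
    · exfalso
      apply huV
      have hux : u = (c 0)⁻¹ • x := by
        rw [hxu, smul_smul, inv_mul_cancel₀ hc0, one_smul]
      rw [hux]
      exact V.smul_mem _ hxV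
  exact ⟨T, E, F, hTrk, hErk, hFrk, h1, h2U, h2V, h3, h4, h5U, h5V, h6U, h6V⟩

end AdjPrf


/-- If `H` is infinite-dimensional, `n > 1`, and `φ : P_n(H) → P_n(H)` preserves the
properties `ma(·,·) = π/2` and `ma(·,·) = 0` in both directions, then `φ` preserves
adjacency: `dim (U ∩ V) = n − 1` implies `dim (φ(U) ∩ φ(V)) = n − 1`. -/
theorem adjacency_preserved
    {H : Type*} [NormedAddCommGroup H] [InnerProductSpace ℂ H] [CompleteSpace H]
    (hH : ¬ FiniteDimensional ℂ H)
    (n : ℕ) (hn : 1 < n)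
    (φ : {U : Submodule ℂ H // Module.finrank ℂ U = n} →
         {U : Submodule ℂ H // Module.finrank ℂ U = n})
    (hφ₁ : ∀ U V, minAngle (φ U).1 (φ V).1 = Real.pi / 2 ↔ minAngle U.1 V.1 = Real.pi / 2)
    (hφ₂ : ∀ U V, minAngle (φ U).1 (φ V).1 = 0 ↔ minAngle U.1 V.1 = 0) :
    ∀ U V, Module.finrank ℂ (U.1 ⊓ V.1 : Submodule ℂ H) = n - 1 →
      Module.finrank ℂ ((φ U).1 ⊓ (φ V).1 : Submodule ℂ H) = n - 1 := by
  open AdjPrf in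
  intro U V hUV
  obtain ⟨p, rfl⟩ : ∃ p, n = p + 2 := ⟨n - 2, by omega⟩
  haveI : NeZero (p + 2) := ⟨by omega⟩
  have hpos : (0:ℕ) < p + 2 := by omega
  have hUV' : Module.finrank ℂ (U.1 ⊓ V.1 : Submodule ℂ H) = p + 1 := by
    omega
  obtain ⟨T, E, F, hTrk, hErk, hFrk, h1, h2U, h2V, h3, h4, h5U, h5V, h6U, h6V⟩ :=
    AdjPrf.completeness hH U.2 V.2 hUV'
  -- wrap witnesses in the subtype
  set Ts : Fin (p+1) → {W : Submodule ℂ H // Module.finrank ℂ W = p + 2} :=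
    fun i => ⟨T i, hTrk i⟩ with hTs
  set Es : Fin (p+2) → {W : Submodule ℂ H // Module.finrank ℂ W = p + 2} :=
    fun k => ⟨E k, hErk k⟩ with hEs
  set Fs : {W : Submodule ℂ H // Module.finrank ℂ W = p + 2} := ⟨F, hFrk⟩ with hFs
  -- transfer of the two relations along φ
  have nb : ∀ A : {W : Submodule ℂ H // Module.finrank ℂ W = p + 2}, A.1 ≠ ⊥ :=
    fun A => AdjPrf.ne_bot_of_finrank_pos hpos A.2
  have hOrthIff : ∀ A B : {W : Submodule ℂ H // Module.finrank ℂ W = p + 2},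
      Orth (φ A).1 (φ B).1 ↔ Orth A.1 B.1 := by
    intro A B
    rw [← AdjPrf.minAngle_eq_pi_div_two_iff (nb (φ A)) (nb (φ B)),
        ← AdjPrf.minAngle_eq_pi_div_two_iff (nb A) (nb B)]
    exact hφ₁ A B
  have hIcapIff : ∀ A B : {W : Submodule ℂ H // Module.finrank ℂ W = p + 2},
      ((φ A).1 ⊓ (φ B).1 ≠ ⊥) ↔ (A.1 ⊓ B.1 ≠ ⊥) := by
    intro A B
    rw [← AdjPrf.minAngle_eq_zero_iff hpos (φ A).2 (φ B).2,
        ← AdjPrf.minAngle_eq_zero_iff hpos A.2 B.2]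
    exact hφ₂ A B
  -- apply soundness to the images
  have := AdjPrf.soundness (n := p + 2) (by omega) (φ U).2 (φ V).2
    (fun i => (φ (Ts i)).1) (fun k => (φ (Es k)).1) (φ Fs).1
    (fun i => (φ (Ts i)).2)
    (fun i j hij => (hOrthIff (Ts i) (Ts j)).2 (h1 i j hij))
    (fun i => (hIcapIff (Ts i) U).2 (h2U i))
    (fun i => (hIcapIff (Ts i) V).2 (h2V i))
    (fun k k' hkk => (hOrthIff (Es k) (Es k')).2 (h3 k k' hkk))
    (fun i k => (hIcapIff (Ts i) (Es k)).2 (h4 i k))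
    (fun k hk => (hOrthIff (Es k) U).2 (h5U k hk))
    (fun k hk => (hOrthIff (Es k) V).2 (h5V k hk))
    ((hIcapIff Fs U).2 h6U)
    (by
      by_contra hc
      exact ((hIcapIff Fs V).1 hc) h6V)
  exact this
end

section
/- Let H be a complex Hilbert space with dim H ≥ 3 (possibly infinite) and T : H → H a bijective linear map such that for all x, y ∈ H, ⟨x, y⟩ = 0 implies ⟨Tx, Ty⟩ = 0. Then T is a scalar multiple of a linear isometry: there exists a constant c > 0 such that ‖Tx‖ = c‖x‖ for all x ∈ H. -/
/-- A bijective linear map on a complex Hilbert space of dimension at least `3` which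
preserves orthogonality is a positive scalar multiple of a linear isometry. -/
theorem orthogonality_preserving_bijection_is_scalar_multiple_of_isometry
    {H : Type*} [NormedAddCommGroup H] [InnerProductSpace ℂ H] [CompleteSpace H]
    (hdim : (3 : Cardinal) ≤ Module.rank ℂ H)
    (T : H →ₗ[ℂ] H) (hbij : Function.Bijective T)
    (horth : ∀ x y : H, (inner ℂ x y : ℂ) = 0 → (inner ℂ (T x) (T y) : ℂ) = 0) :
    ∃ c : ℝ, 0 < c ∧ ∀ x : H, ‖T x‖ = c * ‖x‖ := by
  -- Step A: orthogonal unit vectors have images of equal norm.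
  have stepA : ∀ u v : H, ‖u‖ = 1 → ‖v‖ = 1 → (inner ℂ u v : ℂ) = 0 → ‖T u‖ = ‖T v‖ := by
    intro u v hu hv huv
    have hvu : (inner ℂ v u : ℂ) = 0 := by rwa [inner_eq_zero_symm] at huv
    have h1 : (inner ℂ (T u) (T v) : ℂ) = 0 := horth _ _ huv
    have h2 : (inner ℂ (T v) (T u) : ℂ) = 0 := horth _ _ hvu
    have h3 : (inner ℂ (u + v) (u - v) : ℂ) = 0 := by
      simp [inner_add_left, inner_sub_right, huv, hvu,
        inner_self_eq_norm_sq_to_K, hu, hv]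
    have h4 := horth _ _ h3
    rw [map_add, map_sub] at h4
    simp [inner_add_left, inner_sub_right, h1, h2,
      inner_self_eq_norm_sq_to_K, sub_eq_zero] at h4
    have h5 : ‖T u‖ ^ 2 = ‖T v‖ ^ 2 := by exact_mod_cast h4
    nlinarith [norm_nonneg (T u), norm_nonneg (T v)]
  -- Step B: for any two vectors there is a unit vector orthogonal to both.
  have stepB : ∀ u v : H, ∃ z : H, ‖z‖ = 1 ∧ (inner ℂ u z : ℂ) = 0 ∧ (inner ℂ v z : ℂ) = 0 := by
    intro u v
    set K : Submodule ℂ H := Submodule.span ℂ {u, v} with hK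
    have hfd : FiniteDimensional ℂ K := by
      apply FiniteDimensional.span_of_finite
      exact (Set.finite_singleton v).insert u
    have hne : Kᗮ ≠ ⊥ := by
      intro hbot
      have htop : K = ⊤ := (Submodule.orthogonal_eq_bot_iff).mp hbot
      have hrk : Module.rank ℂ K ≤ 2 := by
        refine le_trans (rank_span_le _) ?_
        refine le_trans (Cardinal.mk_insert_le) ?_
        norm_num
      rw [htop] at hrk
      rw [rank_top] at hrk
      have : (3 : Cardinal) ≤ 2 := le_trans hdim hrk
      norm_num at this
    obtain ⟨w, hwK, hw0⟩ := Submodule.exists_mem_ne_zero_of_ne_bot hne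
    refine ⟨(‖w‖ : ℂ)⁻¹ • w, norm_smul_inv_norm hw0, ?_, ?_⟩
    · rw [inner_smul_right]
      have : (inner ℂ u w : ℂ) = 0 := hwK u (Submodule.subset_span (by simp))
      rw [this]; ring
    · rw [inner_smul_right]
      have : (inner ℂ v w : ℂ) = 0 := hwK v (Submodule.subset_span (by simp))
      rw [this]; ring
  -- all unit vectors have images of equal norm
  have stepC : ∀ u v : H, ‖u‖ = 1 → ‖v‖ = 1 → ‖T u‖ = ‖T v‖ := by
    intro u v hu hv
    obtain ⟨z, hz, huz, hvz⟩ := stepB u v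
    rw [stepA u z hu hz huz, ← stepA v z hv hz hvz]
  obtain ⟨e, he, -, -⟩ := stepB 0 0
  have he0 : e ≠ 0 := by intro h; rw [h, norm_zero] at he; norm_num at he
  refine ⟨‖T e‖, ?_, ?_⟩
  · rw [norm_pos_iff]
    intro h
    exact he0 (hbij.injective (by rw [h, map_zero]))
  · intro x
    rcases eq_or_ne x 0 with rfl | hx
    · simp
    · have hu : ‖(‖x‖ : ℂ)⁻¹ • x‖ = 1 := norm_smul_inv_norm hx
      have := stepC _ e hu he
      rw [map_smul, norm_smul] at this
      have hxn : ‖x‖ ≠ 0 := norm_ne_zero_iff.mpr hx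
      simp only [norm_inv, Complex.norm_real, Real.norm_eq_abs, abs_norm] at this
      field_simp at this
      linarith [this]
end
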